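/- arXiv:2206.11725 — 7 statements merged into one kernel-verified Lean document; each statement's English description precedes it below -/
import Mathlib

section
/- Let n ≥ 1, let w be a word over 𝒜_n, let k ∈ ℕ with 1 ≤ k, and let s_k be an index with k ≤ s_k ≤ |w|. If ↑^{k−1}_w(s_k) = a for some letter a ∈ 𝒜_n, then there exist indices s_1 < s_2 < ⋯ < s_k ≤ |w| such that w_{s_1} > w_{s_2} > ⋯ > w_{s_k} (i.e. w_{s_1}, …, w_{s_k} is a strictly decreasing subsequence of w), w_{s_1} = a, and ↑^{l−1}_w(s_l) = a for every l with 1 < l ≤ k. -/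
/-- The (max-plus) tropical semiring carrier: ℝ ∪ {-∞}. -/
abbrev Trop : Type := WithBot ℝ

/-- Tropical (max-plus) matrix multiplication. -/
def tmul {m : ℕ} (A B : Matrix (Fin m) (Fin m) Trop) : Matrix (Fin m) (Fin m) Trop :=
  fun i j => Finset.univ.sup fun k => A i k + B k j

/-- The tropical identity matrix. -/
def tropId (m : ℕ) : Matrix (Fin m) (Fin m) Trop :=
  fun i j => if i = j then (0 : Trop) else ⊥

/-- Tropical matrix power. -/
def tpow {m : ℕ} (A : Matrix (Fin m) (Fin m) Trop) : ℕ → Matrix (Fin m) (Fin m) Trop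
  | 0 => tropId m
  | k + 1 => tmul A (tpow A k)

/-- A matrix is upper unitriangular if its diagonal entries are 0 (the tropical one)
and its entries below the diagonal are -∞ (the tropical zero). -/
def IsUnitriangular {m : ℕ} (A : Matrix (Fin m) (Fin m) Trop) : Prop :=
  (∀ i, A i i = 0) ∧ ∀ i j : Fin m, j < i → A i j = ⊥

/-- For a letter `x` of `𝒜_n` (represented by `x : Fin n`, standing for the letter `x.val + 1`),
`bar x` is the matrix index corresponding to `x̄ = n + 1 - (x.val + 1)`
(indices `1, …, n+1` being represented by `Fin (n+1)`, index `i` as value `i - 1`). -/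
def bar {n : ℕ} (x : Fin n) : Fin (n + 1) := ⟨n - 1 - x.val, by omega⟩

/-- The image of a letter under ρ_n. -/
def letterMat {n : ℕ} (x : Fin n) : Matrix (Fin (n + 1)) (Fin (n + 1)) Trop :=
  fun i j => if i = j then (0 : Trop) else if i ≤ bar x ∧ bar x < j then (1 : Trop) else ⊥

/-- The homomorphism ρ_n on words over 𝒜_n. -/
def rhoList {n : ℕ} : List (Fin n) → Matrix (Fin (n + 1)) (Fin (n + 1)) Trop
  | [] => tropId (n + 1)
  | x :: xs => tmul (letterMat x) (rhoList xs)

/-- The defining relations of the stylic monoid: the Knuth relations together with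
idempotency of the generators. Letters of `𝒜_n` are `Fin n` with its order. -/
inductive StylRel (n : ℕ) : FreeMonoid (Fin n) → FreeMonoid (Fin n) → Prop
  | knuth₁ (a b c : Fin n) : a ≤ b → b < c →
      StylRel n (.of a * .of c * .of b) (.of c * .of a * .of b)
  | knuth₂ (a b c : Fin n) : a < b → b ≤ c →
      StylRel n (.of b * .of a * .of c) (.of b * .of c * .of a)
  | idem (a : Fin n) : StylRel n (.of a * .of a) (.of a)

/-- The stylic congruence on 𝒜_n^*. -/
def stylCon (n : ℕ) : Con (FreeMonoid (Fin n)) := conGen (StylRel n)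

/-- The stylic monoid of rank n. -/
abbrev Styl (n : ℕ) := (stylCon n).Quotient

/-- A monoid `M` satisfies the identity `u ≈ v` if every evaluation of the variables
in `M` gives `u` and `v` the same value. -/
def Satisfies (M : Type*) [Monoid M] {σ : Type*} (u v : FreeMonoid σ) : Prop :=
  ∀ φ : FreeMonoid σ →* M, φ u = φ v

/-- `up B a` is the smallest letter of `B` strictly greater than `a`
(`none` playing the role of ε). -/
def up {n : ℕ} (B : Finset (Fin n)) (a : Fin n) : Option (Fin n) :=
  if h : (B.filter fun b => a < b).Nonempty then some ((B.filter fun b => a < b).min' h)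
  else none

/-- The map δ: `δ(ε) = ε` and `δ(w·a) = δ(w) · a↑_{supp w}`. -/
def delta {n : ℕ} (w : List (Fin n)) : List (Fin n) :=
  (List.range w.length).filterMap fun i => w[i]?.bind (up (w.take i).toFinset)

/-- The "arrow" maps: `arrow w 0 i = w_i`, and
`arrow w l i = (arrow w (l-1) i)↑_{supp(δ^{l-1}(w_{≤ i}))}` (positions 0-indexed). -/
def arrow {n : ℕ} (w : List (Fin n)) : ℕ → ℕ → Option (Fin n)
  | 0, i => w[i]?
  | k + 1, i => (arrow w k i).bind (up (delta^[k] (w.take (i + 1))).toFinset)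

/-- `w` has a strictly decreasing subsequence of length `k` all of whose letters `a`
satisfy `i ≤ ā < j`. -/
def HasDecrSubseq {n : ℕ} (w : List (Fin n)) (i j : Fin (n + 1)) (k : ℕ) : Prop :=
  ∃ (s : Fin k → ℕ) (hs : ∀ l, s l < w.length),
    StrictMono s ∧
    (∀ l m : Fin k, l < m → w[s m]'(hs m) < w[s l]'(hs l)) ∧
    ∀ l : Fin k, i ≤ bar (w[s l]'(hs l)) ∧ bar (w[s l]'(hs l)) < j

/-- The involution on words: reverse and replace each letter `a` by `n + 1 - a`. -/
def wordStar {n : ℕ} (w : List (Fin n)) : List (Fin n) :=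
  w.reverse.map fun a => ⟨n - 1 - a.val, by have := a.isLt; omega⟩

/-- Skew transposition of an `(m+1) × (m+1)` tropical matrix. -/
def skewT {m : ℕ} (A : Matrix (Fin (m + 1)) (Fin (m + 1)) Trop) :
    Matrix (Fin (m + 1)) (Fin (m + 1)) Trop :=
  fun i j => A ⟨m - j.val, by omega⟩ ⟨m - i.val, by omega⟩

section Lemmas
variable {n : ℕ}

lemma up_spec {B : Finset (Fin n)} {a y : Fin n} (h : up B a = some y) :
    a < y ∧ y ∈ B ∧ ∀ z ∈ B, a < z → y ≤ z := by
  unfold up at h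
  split_ifs at h with hne
  · obtain rfl : (B.filter fun b => a < b).min' hne = y := Option.some.inj h
    have hmem := Finset.min'_mem (B.filter fun b => a < b) hne
    rw [Finset.mem_filter] at hmem
    exact ⟨hmem.2, hmem.1, fun z hz haz =>
      Finset.min'_le _ z (Finset.mem_filter.2 ⟨hz, haz⟩)⟩

lemma up_some_of_mem {B : Finset (Fin n)} {a x : Fin n} (hx : x ∈ B) (hax : a < x) :
    ∃ y, up B a = some y := by
  unfold up
  have hne : (B.filter fun b => a < b).Nonempty := ⟨x, Finset.mem_filter.2 ⟨hx, hax⟩⟩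
  rw [dif_pos hne]
  exact ⟨_, rfl⟩

lemma up_insert_self (B : Finset (Fin n)) (a : Fin n) : up (insert a B) a = up B a := by
  unfold up
  rw [Finset.filter_insert, if_neg (lt_irrefl a)]

lemma filterMap_range_getElem? (u : List (Fin n)) (N : ℕ) :
    (List.range N).filterMap (fun j => u[j]?) = u.take N := by
  induction N with
  | zero => simp
  | succ N ih =>
    rw [List.range_succ, List.filterMap_append, ih, List.take_succ]
    congr 1

lemma filterMap_singleton' (f : ℕ → Option (Fin n)) (a : ℕ) :
    [a].filterMap f = (f a).toList := by
  cases h : f a <;> simp [List.filterMap, h]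

lemma delta_concat (u : List (Fin n)) (x : Fin n) :
    delta (u ++ [x]) = delta u ++ (up u.toFinset x).toList := by
  unfold delta
  rw [List.length_append, List.length_singleton, List.range_succ, List.filterMap_append]
  congr 1
  · apply List.filterMap_congr
    intro i hi
    rw [List.mem_range] at hi
    rw [List.getElem?_append_left hi, List.take_append_of_le_length (le_of_lt hi)]
  · have h1 : (u ++ [x])[u.length]? = some x := by simp
    have h2 : (u ++ [x]).take u.length = u := by simp
    rw [filterMap_singleton', h1, h2, Option.bind_some]

/-- The support set at level m of the prefix ending at position p. -/
def Sset (w : List (Fin n)) (m p : ℕ) : Finset (Fin n) :=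
  (delta^[m] (w.take (p + 1))).toFinset

lemma arrow_succ (w : List (Fin n)) (m p : ℕ) :
    arrow w (m + 1) p = (arrow w m p).bind (up (Sset w m p)) := rfl

lemma deltaIter_take (w : List (Fin n)) (m : ℕ) :
    ∀ N, delta^[m] (w.take N) = (List.range N).filterMap (arrow w m) := by
  induction m with
  | zero =>
    intro N
    simp only [Function.iterate_zero, id]
    exact (filterMap_range_getElem? w N).symm
  | succ m ih =>
    intro N
    rw [Function.iterate_succ_apply', ih N]
    induction N with
    | zero => simp [delta]
    | succ N ihN =>
      rw [List.range_succ, List.filterMap_append, List.filterMap_append, ← ihN]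
      cases h : arrow w m N with
      | none =>
        have h2 : arrow w (m+1) N = none := by rw [arrow_succ, h]; rfl
        simp [List.filterMap, h, h2]
      | some x =>
        have hfm : [N].filterMap (arrow w m) = [x] := by simp [List.filterMap, h]
        rw [hfm, delta_concat]
        congr 1
        have h2 : arrow w (m+1) N = up ((List.range N).filterMap (arrow w m)).toFinset x := by
          rw [arrow_succ, h, Option.bind_some]
          unfold Sset
          rw [ih (N+1), List.range_succ, List.filterMap_append, hfm,
            List.toFinset_append]
          have : ((List.range N).filterMap (arrow w m)).toFinset ∪ [x].toFinset
              = insert x ((List.range N).filterMap (arrow w m)).toFinset := by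
            ext y; simp [or_comm]
          rw [this, up_insert_self]
        cases h3 : up ((List.range N).filterMap (arrow w m)).toFinset x <;>
          simp [List.filterMap, h2, h3]

lemma mem_Sset {w : List (Fin n)} {m p : ℕ} {x : Fin n} :
    x ∈ Sset w m p ↔ ∃ q, q ≤ p ∧ arrow w m q = some x := by
  unfold Sset
  rw [deltaIter_take, List.mem_toFinset, List.mem_filterMap]
  constructor
  · rintro ⟨q, hq, hqx⟩
    exact ⟨q, by simpa using Nat.lt_succ_iff.mp (List.mem_range.mp hq), hqx⟩
  · rintro ⟨q, hq, hqx⟩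
    exact ⟨q, List.mem_range.mpr (Nat.lt_succ_of_le hq), hqx⟩

lemma Sset_mono {w : List (Fin n)} {m p p' : ℕ} (h : p ≤ p') :
    Sset w m p ⊆ Sset w m p' := by
  intro x hx
  rw [mem_Sset] at hx ⊢
  obtain ⟨q, hq, hqx⟩ := hx
  exact ⟨q, le_trans hq h, hqx⟩

lemma arrow_some_pos {w : List (Fin n)} {m p : ℕ} {x : Fin n}
    (h : arrow w m p = some x) : p < w.length := by
  induction m generalizing x with
  | zero => exact (List.getElem?_eq_some_iff.mp h).1
  | succ m ih =>
    rw [arrow_succ] at h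
    cases h' : arrow w m p with
    | none => rw [h'] at h; exact absurd h (by simp)
    | some c => exact ih h'

/-- INNER lemma: climbing positions strictly between j and i eventually produce
    a position with arrow value a at level m+1, contradicting maximality. -/
lemma inner {w : List (Fin n)} {m j i : ℕ} {c a : Fin n}
    (haS : a ∈ Sset w m j) (hmin : ∀ z ∈ Sset w m j, c < z → a ≤ z)
    (hmax : ∀ q, j < q → q < i → arrow w (m+1) q ≠ some a) :
    ∀ gap e p, a.val - e.val ≤ gap → j < p → p < i →
      arrow w m p = some e → c < e → e < a → False := by
  intro gap
  induction gap with
  | zero =>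
    intro e p hgap _ _ _ _ hea
    omega
  | succ gap ihgap =>
    intro e p hgap hjp hpi hpe hce hea
    have haSp : a ∈ Sset w m p := Sset_mono (le_of_lt hjp) haS
    obtain ⟨e', he'⟩ := up_some_of_mem haSp hea
    obtain ⟨hee', he'S, he'min⟩ := up_spec he'
    have harr : arrow w (m+1) p = some e' := by rw [arrow_succ, hpe, Option.bind_some, he']
    have he'a : e' ≤ a := he'min a haSp hea
    rcases eq_or_lt_of_le he'a with rfl | he'lta
    · exact hmax p hjp hpi harr
    obtain ⟨p', hp'le, hp'⟩ := mem_Sset.mp he'S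
    have hce' : c < e' := lt_trans hce hee'
    have hjp' : j < p' := by
      by_contra hle
      push_neg at hle
      have : e' ∈ Sset w m j := mem_Sset.mpr ⟨p', hle, hp'⟩
      exact absurd (hmin e' this hce') (not_le.mpr he'lta)
    exact ihgap e' p' (by omega) hjp' (lt_of_le_of_lt hp'le hpi) hp' hce' he'lta

/-- KEY lemma: maximal earlier position with strictly larger arrow value has a
    strictly larger letter. -/
lemma key {w : List (Fin n)} :
    ∀ (m : ℕ) {j i : ℕ} {a b : Fin n}, j < i →
      arrow w m j = some a → arrow w m i = some b → b < a →
      (∀ q, j < q → q < i → arrow w m q ≠ some a) →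
      ∀ (hj : j < w.length) (hi : i < w.length), w[i] < w[j] := by
  intro m
  induction m with
  | zero =>
    intro j i a b hji hja hib hba _ hj hi
    simp only [arrow, List.getElem?_eq_getElem, hj, hi, Option.some.injEq] at hja hib
    · rw [hja, hib]; exact hba
  | succ m ih =>
    intro j i a b hji hja hib hba hmax hj hi
    rw [arrow_succ] at hja hib
    cases hc : arrow w m j with
    | none => rw [hc] at hja; exact absurd hja (by simp)
    | some c =>
    cases hd : arrow w m i with
    | none => rw [hd] at hib; exact absurd hib (by simp)
    | some d =>
    rw [hc, Option.bind_some] at hja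
    rw [hd, Option.bind_some] at hib
    obtain ⟨hca, haS, hamin⟩ := up_spec hja
    obtain ⟨hdb, hbS, hbmin⟩ := up_spec hib
    -- (A) : d < c
    have hdc : d < c := by
      by_contra hle
      push_neg at hle
      have hcb : c < b := lt_of_le_of_lt hle hdb
      have hbnotS : b ∉ Sset w m j := fun hbj => absurd (hamin b hbj hcb) (not_le.mpr hba)
      obtain ⟨p, hple, hp⟩ := mem_Sset.mp hbS
      have hpi : p < i := lt_of_le_of_ne hple (fun h => by
        rw [h, hd] at hp
        exact absurd (Option.some.inj hp) (ne_of_lt hdb))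
      have hjp : j < p := by
        by_contra hle2
        push_neg at hle2
        exact hbnotS (mem_Sset.mpr ⟨p, hle2, hp⟩)
      exact inner haS hamin hmax a.val b p (by omega) hjp hpi hp hcb hba
    -- (B) : maximality at level m
    have hmaxm : ∀ q, j < q → q < i → arrow w m q ≠ some c := by
      intro q hjq hqi hqc
      have haSq : a ∈ Sset w m q := Sset_mono (le_of_lt hjq) haS
      obtain ⟨e', he'⟩ := up_some_of_mem haSq hca
      obtain ⟨hce', he'S, he'min⟩ := up_spec he'
      have harr : arrow w (m+1) q = some e' := by rw [arrow_succ, hqc, Option.bind_some, he']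
      have he'a : e' ≤ a := he'min a haSq hca
      rcases eq_or_lt_of_le he'a with rfl | he'lta
      · exact hmax q hjq hqi harr
      obtain ⟨p', hp'le, hp'⟩ := mem_Sset.mp he'S
      have hjp' : j < p' := by
        by_contra hle
        push_neg at hle
        exact absurd (hamin e' (mem_Sset.mpr ⟨p', hle, hp'⟩) hce')
          (not_le.mpr he'lta)
      exact inner haS hamin hmax a.val e' p' (by omega) hjp'
        (lt_of_le_of_lt hp'le hqi) hp' hce' he'lta
    exact ih hji hc hd hdc hmaxm hj hi

/-- Existence of a maximal earlier position carrying value a, with smaller letter. -/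
lemma exists_pred_pos {w : List (Fin n)} {m i : ℕ} {a : Fin n}
    (hi : i < w.length) (ha : arrow w (m+1) i = some a) :
    ∃ j, j < i ∧ arrow w m j = some a ∧
      (∀ q, j < q → q < i → arrow w m q ≠ some a) ∧
      ∀ (hj : j < w.length), w[i] < w[j] := by
  rw [arrow_succ] at ha
  cases hb : arrow w m i with
  | none => rw [hb] at ha; exact absurd ha (by simp)
  | some b =>
  rw [hb, Option.bind_some] at ha
  obtain ⟨hba, haS, hamin⟩ := up_spec ha
  obtain ⟨j0, hj0le, hj0⟩ := mem_Sset.mp haS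
  have hj0i : j0 < i := lt_of_le_of_ne hj0le (fun h => by
    rw [h, hb] at hj0
    exact absurd (Option.some.inj hj0) (ne_of_lt hba))
  set T := (Finset.range i).filter (fun q => arrow w m q = some a) with hT
  have hTne : T.Nonempty := ⟨j0, Finset.mem_filter.2 ⟨Finset.mem_range.2 hj0i, hj0⟩⟩
  set j := T.max' hTne with hj
  have hjmem := T.max'_mem hTne
  rw [Finset.mem_filter, Finset.mem_range] at hjmem
  refine ⟨j, hjmem.1, hjmem.2, ?_, ?_⟩
  · intro q hjq hqi hqa
    have : q ∈ T := Finset.mem_filter.2 ⟨Finset.mem_range.2 hqi, hqa⟩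
    exact absurd (Finset.le_max' T q this) (not_le.mpr hjq)
  · intro hjlen
    exact key m hjmem.1 hjmem.2 hb hba
      (fun q hq1 hq2 hqa => absurd (Finset.le_max' T q
        (Finset.mem_filter.2 ⟨Finset.mem_range.2 hq2, hqa⟩)) (not_le.mpr hq1)) hjlen hi

/-- Main auxiliary: full decreasing subsequence. -/
lemma aux {w : List (Fin n)} :
    ∀ (k i : ℕ) (a : Fin n), i < w.length → arrow w k i = some a →
    ∃ (s : Fin (k+1) → ℕ) (hs : ∀ l, s l < w.length),
      StrictMono s ∧ s (Fin.last k) = i ∧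
      (∀ l m : Fin (k+1), l < m → w[s m]'(hs m) < w[s l]'(hs l)) ∧
      (∀ l : Fin (k+1), arrow w l.val (s l) = some a) := by
  intro k
  induction k with
  | zero =>
    intro i a hi ha
    refine ⟨fun _ => i, fun _ => hi, ?_, rfl, ?_, ?_⟩
    · intro u v huv; exact absurd huv (by omega)
    · intro l m hlm; exact absurd hlm (by omega)
    · intro l
      have : l.val = 0 := by omega
      rw [this]; exact ha
  | succ k ih =>
    intro i a hi ha
    obtain ⟨j, hji, hja, _, hlt⟩ := exists_pred_pos hi ha
    have hjlen : j < w.length := arrow_some_pos hja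
    obtain ⟨s', hs', hmono', hlast', hdec', harr'⟩ := ih j a hjlen hja
    have hbound : ∀ l : Fin (k+1), s' l ≤ j := by
      intro l
      rw [← hlast']
      exact hmono'.monotone (Fin.le_last l)
    refine ⟨Fin.snoc s' i, ?_, ?_, ?_, ?_, ?_⟩
    · intro l
      refine Fin.lastCases ?_ ?_ l
      · rw [Fin.snoc_last]; exact hi
      · intro u; rw [Fin.snoc_castSucc]; exact hs' u
    · intro u v huv
      by_cases hv : v = Fin.last (k+1)
      · subst hv
        obtain ⟨u', rfl⟩ := Fin.exists_castSucc_eq.mpr (ne_of_lt huv)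
        rw [Fin.snoc_last, Fin.snoc_castSucc]
        exact lt_of_le_of_lt (hbound u') hji
      · obtain ⟨v', rfl⟩ := Fin.exists_castSucc_eq.mpr hv
        have hu : u ≠ Fin.last (k+1) := by
          intro h
          rw [h] at huv
          exact absurd (lt_of_lt_of_le huv (Fin.le_last _)) (lt_irrefl _)
        obtain ⟨u', rfl⟩ := Fin.exists_castSucc_eq.mpr hu
        rw [Fin.snoc_castSucc, Fin.snoc_castSucc]
        exact hmono' (Fin.castSucc_lt_castSucc_iff.mp huv)
    · rw [Fin.snoc_last]
    · intro l m hlm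
      by_cases hm : m = Fin.last (k+1)
      · subst hm
        obtain ⟨l', rfl⟩ := Fin.exists_castSucc_eq.mpr (ne_of_lt hlm)
        simp only [Fin.snoc_last, Fin.snoc_castSucc]
        refine lt_of_lt_of_le (hlt hjlen) ?_
        rcases eq_or_lt_of_le (Fin.le_last l') with h | h
        · have : s' l' = j := by rw [h, hlast']
          simp only [this]
          exact le_refl _
        · have h2 := hdec' l' (Fin.last k) h
          simp only [hlast'] at h2
          exact le_of_lt h2
      · obtain ⟨m', rfl⟩ := Fin.exists_castSucc_eq.mpr hm
        have hl : l ≠ Fin.last (k+1) := by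
          intro h
          rw [h] at hlm
          exact absurd (lt_of_lt_of_le hlm (Fin.le_last _)) (lt_irrefl _)
        obtain ⟨l', rfl⟩ := Fin.exists_castSucc_eq.mpr hl
        simp only [Fin.snoc_castSucc]
        exact hdec' l' m' (Fin.castSucc_lt_castSucc_iff.mp hlm)
    · intro l
      refine Fin.lastCases ?_ ?_ l
      · rw [Fin.snoc_last]; exact ha
      · intro u; rw [Fin.snoc_castSucc]; exact harr' u

end Lemmas

/-- If `↑^{k-1}_w(s_k) = a` (positions 0-indexed: `i = s_k - 1`), then there is a
strictly decreasing subsequence `w_{s_1} > ⋯ > w_{s_k}` of `w` with `w_{s_1} = a`,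
ending at the given position, and `↑^{l-1}_w(s_l) = a` for all `1 < l ≤ k`. -/
theorem arrow_gives_decreasing_subsequence
    (n : ℕ) (hn : 1 ≤ n) (w : List (Fin n)) (k : ℕ) (hk : 1 ≤ k)
    (i : ℕ) (hki : k - 1 ≤ i) (hi : i < w.length) (a : Fin n)
    (ha : arrow w (k - 1) i = some a) :
    ∃ (s : Fin k → ℕ) (hs : ∀ l, s l < w.length),
      StrictMono s ∧
      s ⟨k - 1, by omega⟩ = i ∧
      (∀ l m : Fin k, l < m → w[s m]'(hs m) < w[s l]'(hs l)) ∧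
      w[s ⟨0, by omega⟩]'(hs ⟨0, by omega⟩) = a ∧
      (∀ l : Fin k, 1 ≤ l.val → arrow w l.val (s l) = some a) := by
  obtain ⟨k', rfl⟩ : ∃ k', k = k' + 1 := ⟨k - 1, by omega⟩
  obtain ⟨s, hs, hmono, hlastEq, hdec, harr⟩ := aux k' i a hi ha
  refine ⟨s, hs, hmono, hlastEq, hdec, ?_, fun l _ => harr l⟩
  have h0 : w[s ⟨0, by omega⟩]? = some a := harr ⟨0, by omega⟩
  rw [List.getElem?_eq_getElem (hs _)] at h0
  exact Option.some.inj h0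
end

section
/- Let n ≥ 1, let w be a word over 𝒜_n, let 1 ≤ i < j ≤ n+1 and let k ∈ ℕ with k ≥ 1. Then ρ_n(w)_{i,j} = k if and only if k is the maximum length of a strictly decreasing subsequence of w all of whose letters a satisfy i ≤ n+1−a < j. Moreover, ρ_n(w)_{i,j} = −∞ if and only if w contains no letter a with i ≤ n+1−a < j. -/
/-! ### Auxiliary development for the proof -/

namespace RhoAux

variable {n : ℕ}

/-- Successor of `bar x` as an index. -/
def sx (x : Fin n) : Fin (n + 1) := ⟨(bar x).val + 1, by have := x.isLt; simp only [bar]; omega⟩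

lemma bar_val (x : Fin n) : (bar x).val = n - 1 - x.val := rfl

lemma sx_val (x : Fin n) : (sx x).val = (bar x).val + 1 := rfl

lemma bar_lt_bar {a b : Fin n} (h : a < b) : bar b < bar a := by
  have ha := a.isLt; have hb := b.isLt
  simp only [Fin.lt_def, bar_val] at *
  omega

lemma lt_of_bar_lt {a b : Fin n} (h : bar b < bar a) : a < b := by
  have ha := a.isLt; have hb := b.isLt
  simp only [Fin.lt_def, bar_val] at *
  omega

/-- Length of the longest strictly decreasing subsequence with letters `a`
satisfying `i ≤ bar a < j`. -/
def Nlen : List (Fin n) → Fin (n + 1) → Fin (n + 1) → ℕ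
  | [], _, _ => 0
  | x :: xs, i, j =>
      if i ≤ bar x ∧ bar x < j then max (Nlen xs i j) (Nlen xs (sx x) j + 1)
      else Nlen xs i j

/-- `w` has a letter `a` with `i ≤ bar a < j`. -/
def hasL (w : List (Fin n)) (i j : Fin (n + 1)) : Prop :=
  ∃ x ∈ w, i ≤ bar x ∧ bar x < j

instance (w : List (Fin n)) (i j : Fin (n + 1)) : Decidable (hasL w i j) :=
  List.decidableBEx _ w

/-- The conjectured value of `rhoList w i j`. -/
def val (w : List (Fin n)) (i j : Fin (n + 1)) : Trop :=
  if i = j then 0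
  else if i < j ∧ hasL w i j then ((Nlen w i j : ℝ) : Trop)
  else ⊥

lemma val_self (w : List (Fin n)) (j : Fin (n + 1)) : val w j j = 0 := by simp [val]

lemma val_bot_of_not_lt {w : List (Fin n)} {i j : Fin (n + 1)} (h : ¬ i < j) (hne : i ≠ j) :
    val w i j = ⊥ := by simp [val, hne, h]

lemma val_coe {w : List (Fin n)} {i j : Fin (n + 1)} (h : i < j) (hh : hasL w i j) :
    val w i j = ((Nlen w i j : ℝ) : Trop) := by simp [val, h.ne, h, hh]

lemma val_bot {w : List (Fin n)} {i j : Fin (n + 1)} (h : i < j) (hh : ¬ hasL w i j) :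
    val w i j = ⊥ := by simp [val, h.ne, hh]

lemma hasL_mono {w : List (Fin n)} {i i' j : Fin (n + 1)} (h : i ≤ i') :
    hasL w i' j → hasL w i j := fun ⟨x, hx, h1, h2⟩ => ⟨x, hx, le_trans h h1, h2⟩

lemma Nlen_cons_le (x : Fin n) (xs : List (Fin n)) (i j : Fin (n + 1)) :
    Nlen xs i j ≤ Nlen (x :: xs) i j := by
  simp only [Nlen]; split
  · exact le_max_left _ _
  · exact le_rfl

lemma Nlen_mono {i i' j : Fin (n + 1)} (h : i ≤ i') (w : List (Fin n)) :
    Nlen w i' j ≤ Nlen w i j := by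
  induction w with
  | nil => exact le_rfl
  | cons x xs ih =>
    simp only [Nlen]
    by_cases hc' : i' ≤ bar x ∧ bar x < j
    · have hc : i ≤ bar x ∧ bar x < j := ⟨le_trans h hc'.1, hc'.2⟩
      simp only [hc', hc, if_true]
      exact max_le_max ih le_rfl
    · simp only [hc', if_false]
      split
      · exact le_trans ih (le_max_left _ _)
      · exact ih

lemma Nlen_pos {w : List (Fin n)} {i j : Fin (n + 1)} (hh : hasL w i j) : 1 ≤ Nlen w i j := by
  induction w with
  | nil => obtain ⟨x, hx, -⟩ := hh; simp at hx
  | cons x xs ih =>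
    obtain ⟨a, ha, h1, h2⟩ := hh
    rcases List.mem_cons.mp ha with rfl | ha
    · simp only [Nlen, if_pos (⟨h1, h2⟩ : i ≤ bar a ∧ bar a < j)]
      omega
    · exact le_trans (ih ⟨a, ha, h1, h2⟩) (Nlen_cons_le _ _ _ _)

lemma Nlen_eq_zero {w : List (Fin n)} {i j : Fin (n + 1)} (hh : ¬ hasL w i j) :
    Nlen w i j = 0 := by
  induction w with
  | nil => rfl
  | cons x xs ih =>
    have hc : ¬ (i ≤ bar x ∧ bar x < j) := fun hc => hh ⟨x, List.mem_cons_self, hc⟩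
    have hxs : ¬ hasL xs i j := fun ⟨a, ha, h1, h2⟩ => hh ⟨a, List.mem_cons_of_mem x ha, h1, h2⟩
    simp only [Nlen, if_neg hc]
    exact ih hxs

lemma Nlen_self (w : List (Fin n)) (j : Fin (n + 1)) : Nlen w j j = 0 :=
  Nlen_eq_zero fun ⟨_, _, h1, h2⟩ => absurd (lt_of_le_of_lt h1 h2) (lt_irrefl _)

lemma tadd_max (a b c : Trop) : a + max b c = max (a + b) (a + c) := by
  rcases le_total b c with h | h
  · rw [max_eq_right h, max_eq_right (add_le_add (le_refl a) h)]
  · rw [max_eq_left h, max_eq_left (add_le_add (le_refl a) h)]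

lemma val_le_of_le {w : List (Fin n)} {k k' j : Fin (n + 1)} (hk : k ≤ k') (hkj : k ≤ j) :
    val w k' j ≤ max (val w k j) 0 := by
  rcases lt_trichotomy k' j with hlt | rfl | hgt
  · have hkj' : k < j := lt_of_le_of_lt hk hlt
    by_cases hh : hasL w k' j
    · rw [val_coe hlt hh, val_coe hkj' (hasL_mono hk hh)]
      refine le_trans ?_ (le_max_left _ _)
      exact_mod_cast Nlen_mono hk w
    · rw [val_bot hlt hh]; exact bot_le
  · rw [val_self]; exact le_max_right _ _
  · rw [val_bot_of_not_lt (not_lt_of_gt hgt) (ne_of_gt hgt)]; exact bot_le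

lemma max_val_zero {w : List (Fin n)} {k j : Fin (n + 1)} (hkj : k ≤ j) :
    max (val w k j) 0 = ((Nlen w k j : ℝ) : Trop) := by
  rcases eq_or_lt_of_le hkj with rfl | hlt
  · rw [val_self, Nlen_self]
    simp
  · by_cases hh : hasL w k j
    · rw [val_coe hlt hh, max_eq_left]
      rw [← WithBot.coe_zero, WithBot.coe_le_coe]
      positivity
    · rw [val_bot hlt hh, Nlen_eq_zero hh]
      simp

lemma val_cons_le (x : Fin n) (xs : List (Fin n)) (i j : Fin (n + 1)) :
    val xs i j ≤ val (x :: xs) i j := by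
  rcases eq_or_ne i j with rfl | hne
  · rw [val_self, val_self]
  · by_cases hij : i < j
    · by_cases hh : hasL xs i j
      · rw [val_coe hij hh, val_coe hij ⟨hh.choose, List.mem_cons_of_mem x hh.choose_spec.1,
          hh.choose_spec.2⟩]
        exact_mod_cast Nlen_cons_le x xs i j
      · rw [val_bot hij hh]; exact bot_le
    · rw [val_bot_of_not_lt hij hne]; exact bot_le

lemma rho_eq_val (w : List (Fin n)) : ∀ i j, rhoList w i j = val w i j := by
  induction w with
  | nil =>
    intro i j
    simp only [rhoList, tropId, val, hasL]
    by_cases h : i = j <;> simp [h]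
  | cons x xs ih =>
    intro i j
    have hrw : rhoList (x :: xs) i j = Finset.univ.sup (fun k => letterMat x i k + val xs k j) := by
      simp only [rhoList, tmul]
      congr 1
      funext k
      rw [ih]
    rw [hrw]
    apply le_antisymm
    · apply Finset.sup_le
      intro k _
      by_cases hik : i = k
      · have h1 : letterMat x i k = 0 := by simp [letterMat, hik]
        rw [h1, zero_add, ← hik]
        exact val_cons_le x xs i j
      · by_cases hc : i ≤ bar x ∧ bar x < k
        · have h1 : letterMat x i k = 1 := by simp [letterMat, hik, hc]
          rw [h1]
          by_cases hj : bar x < j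
          · have hij : i < j := lt_of_le_of_lt hc.1 hj
            have hsxj : sx x ≤ j := by
              simp only [Fin.le_def, sx_val]
              exact hj
            have hsxk : sx x ≤ k := by
              simp only [Fin.le_def, sx_val]
              exact hc.2
            have step1 : (1 : Trop) + val xs k j ≤ 1 + ((Nlen xs (sx x) j : ℝ) : Trop) := by
              rw [← max_val_zero hsxj]
              exact add_le_add (le_refl 1) (val_le_of_le hsxk hsxj)
            refine le_trans step1 ?_
            rw [val_coe hij ⟨x, List.mem_cons_self, hc.1, hj⟩]
            have e1 : (1 : Trop) + ((Nlen xs (sx x) j : ℝ) : Trop)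
                = (((Nlen xs (sx x) j + 1 : ℕ) : ℝ) : Trop) := by
              rw [← WithBot.coe_one, ← WithBot.coe_add]
              push_cast
              rw [add_comm]
            rw [e1, WithBot.coe_le_coe, Nat.cast_le]
            have : Nlen (x :: xs) i j = max (Nlen xs i j) (Nlen xs (sx x) j + 1) := by
              simp only [Nlen, if_pos (⟨hc.1, hj⟩ : i ≤ bar x ∧ bar x < j)]
            omega
          · have hjk : j < k := lt_of_le_of_lt (not_lt.mp hj) hc.2
            rw [val_bot_of_not_lt (not_lt_of_gt hjk) (ne_of_gt hjk), WithBot.add_bot]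
            exact bot_le
        · have h1 : letterMat x i k = ⊥ := by simp [letterMat, hik, hc]
          rw [h1, WithBot.bot_add]
          exact bot_le
    · rcases eq_or_ne i j with rfl | hne
      · rw [val_self]
        have : letterMat x i i + val xs i i = 0 := by
          have h1 : letterMat x i i = 0 := by simp [letterMat]
          rw [h1, val_self, zero_add]
        calc (0 : Trop) = letterMat x i i + val xs i i := this.symm
          _ ≤ _ := Finset.le_sup (f := fun k => letterMat x i k + val xs k i) (Finset.mem_univ i)
      · by_cases hij : i < j
        · by_cases hh : hasL (x :: xs) i j
          · rw [val_coe hij hh]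
            by_cases hc : i ≤ bar x ∧ bar x < j
            · have hNsum : Nlen (x :: xs) i j = max (Nlen xs i j) (Nlen xs (sx x) j + 1) := by
                simp only [Nlen, if_pos hc]
              have hsxj : sx x ≤ j := by
                simp only [Fin.le_def, sx_val]; exact hc.2
              have hisx : i < sx x := by
                have := hc.1
                simp only [Fin.lt_def, sx_val, Fin.le_def] at *
                omega
              have hbsx : bar x < sx x := by
                simp only [Fin.lt_def, sx_val]; omega
              have key2 : (((Nlen xs (sx x) j + 1 : ℕ) : ℝ) : Trop)
                  ≤ Finset.univ.sup (fun k => letterMat x i k + val xs k j) := by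
                have e1 : (((Nlen xs (sx x) j + 1 : ℕ) : ℝ) : Trop)
                    = 1 + max (val xs (sx x) j) 0 := by
                  rw [max_val_zero hsxj, ← WithBot.coe_one, ← WithBot.coe_add]
                  push_cast
                  rw [add_comm]
                rw [e1, tadd_max]
                apply max_le
                · have hf : letterMat x i (sx x) + val xs (sx x) j = 1 + val xs (sx x) j := by
                    have : letterMat x i (sx x) = 1 := by
                      simp [letterMat, hisx.ne, hc.1, hbsx]
                    rw [this]
                  calc (1 : Trop) + val xs (sx x) j = _ := hf.symm
                    _ ≤ _ := Finset.le_sup (f := fun k => letterMat x i k + val xs k j) (Finset.mem_univ (sx x))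
                · have hf : letterMat x i j + val xs j j = 1 + 0 := by
                    have : letterMat x i j = 1 := by
                      simp [letterMat, hne, hc.1, hc.2]
                    rw [this, val_self]
                  calc (1 : Trop) + 0 = _ := hf.symm
                    _ ≤ _ := Finset.le_sup (f := fun k => letterMat x i k + val xs k j) (Finset.mem_univ j)
              by_cases hxs : hasL xs i j
              · have key1 : ((Nlen xs i j : ℝ) : Trop)
                    ≤ Finset.univ.sup (fun k => letterMat x i k + val xs k j) := by
                  have hf : letterMat x i i + val xs i j = ((Nlen xs i j : ℝ) : Trop) := by
                    have h1 : letterMat x i i = 0 := by simp [letterMat]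
                    rw [h1, zero_add, val_coe hij hxs]
                  calc ((Nlen xs i j : ℝ) : Trop) = _ := hf.symm
                    _ ≤ _ := Finset.le_sup (f := fun k => letterMat x i k + val xs k j) (Finset.mem_univ i)
                rw [hNsum]
                rw [show (((max (Nlen xs i j) (Nlen xs (sx x) j + 1) : ℕ) : ℝ) : Trop)
                    = max ((Nlen xs i j : ℝ) : Trop) (((Nlen xs (sx x) j + 1 : ℕ) : ℝ) : Trop) by
                  rw [Nat.cast_max, WithBot.coe_max]]
                exact max_le key1 key2
              · rw [hNsum, Nlen_eq_zero hxs]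
                simpa using key2
            · have hxs : hasL xs i j := by
                obtain ⟨a, ha, h1, h2⟩ := hh
                rcases List.mem_cons.mp ha with rfl | ha
                · exact absurd ⟨h1, h2⟩ hc
                · exact ⟨a, ha, h1, h2⟩
              have hNeq : Nlen (x :: xs) i j = Nlen xs i j := by
                simp only [Nlen, if_neg hc]
              rw [hNeq, ← val_coe hij hxs]
              have hf : letterMat x i i + val xs i j = val xs i j := by
                have h1 : letterMat x i i = 0 := by simp [letterMat]
                rw [h1, zero_add]
              calc val xs i j = _ := hf.symm
                _ ≤ _ := Finset.le_sup (f := fun k => letterMat x i k + val xs k j) (Finset.mem_univ i)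
          · rw [val_bot hij hh]; exact bot_le
        · rw [val_bot_of_not_lt hij hne]; exact bot_le

/-! ### Combinatorial part -/

lemma getElem_cons_pos {α : Type*} (x : α) (xs : List α) (t : ℕ) (h1 : 0 < t)
    (ht : t < (x :: xs).length) :
    (x :: xs)[t]'ht = xs[t - 1]'(by simp at ht; omega) := by
  obtain ⟨u, rfl⟩ : ∃ u, t = u + 1 := ⟨t - 1, by omega⟩
  simp

lemma hds_zero (w : List (Fin n)) (i j : Fin (n + 1)) : HasDecrSubseq w i j 0 :=
  ⟨Fin.elim0, fun l => l.elim0, fun l => l.elim0, fun l => l.elim0, fun l => l.elim0⟩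

lemma hds_cons {xs : List (Fin n)} {i j : Fin (n + 1)} {m : ℕ} (x : Fin n)
    (h : HasDecrSubseq xs i j m) : HasDecrSubseq (x :: xs) i j m := by
  obtain ⟨s, hs, hmono, hdec, hrange⟩ := h
  refine ⟨fun l => s l + 1, fun l => by have := hs l; simp; omega, ?_, ?_, ?_⟩
  · intro a b hab
    have := hmono hab
    show s a + 1 < s b + 1
    omega
  · intro l m hlm
    simpa using hdec l m hlm
  · intro l
    simpa using hrange l

lemma hds_cons_head {xs : List (Fin n)} {x : Fin n} {i j : Fin (n + 1)} {m : ℕ}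
    (h1 : i ≤ bar x) (h2 : bar x < j)
    (h : HasDecrSubseq xs (sx x) j m) : HasDecrSubseq (x :: xs) i j (m + 1) := by
  obtain ⟨s, hs, hmono, hdec, hrange⟩ := h
  refine ⟨Fin.cases 0 (fun l => s l + 1), ?_, ?_, ?_, ?_⟩
  · intro l
    induction l using Fin.cases with
    | zero => simp
    | succ l => have := hs l; simp; omega
  · intro a b hab
    induction b using Fin.cases with
    | zero => exact absurd hab (by simp [Fin.lt_def])
    | succ b =>
      induction a using Fin.cases with
      | zero => simp
      | succ a =>
        have hab' : a < b := Fin.succ_lt_succ_iff.mp hab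
        have := hmono hab'
        simp
        omega
  · intro a b hab
    induction b using Fin.cases with
    | zero => exact absurd hab (by simp [Fin.lt_def])
    | succ b =>
      induction a using Fin.cases with
      | zero =>
        simp only [Fin.cases_zero, Fin.cases_succ, List.getElem_cons_zero]
        rw [getElem_cons_pos x xs _ (by omega)]
        simp only [Nat.add_sub_cancel]
        exact lt_of_bar_lt (lt_of_lt_of_le
          (show bar x < sx x by simp [Fin.lt_def, sx_val]) (hrange b).1)
      | succ a =>
        have hab' : a < b := Fin.succ_lt_succ_iff.mp hab
        simp only [Fin.cases_succ]
        rw [getElem_cons_pos x xs _ (by omega), getElem_cons_pos x xs _ (by omega)]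
        simpa using hdec a b hab'
  · intro l
    induction l using Fin.cases with
    | zero =>
      simp only [Fin.cases_zero, List.getElem_cons_zero]
      exact ⟨h1, h2⟩
    | succ l =>
      simp only [Fin.cases_succ]
      rw [getElem_cons_pos x xs _ (by omega)]
      have hr := hrange l
      simp only [show s l + 1 - 1 = s l from rfl] at *
      refine ⟨?_, hr.2⟩
      refine le_trans (le_of_lt (lt_of_le_of_lt h1 ?_)) hr.1
      simp [Fin.lt_def, sx_val]

lemma hds_le_Nlen {w : List (Fin n)} : ∀ {i j : Fin (n + 1)} {m : ℕ},
    HasDecrSubseq w i j m → m ≤ Nlen w i j := by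
  induction w with
  | nil =>
    rintro i j m ⟨s, hs, -, -, -⟩
    match m with
    | 0 => exact Nat.zero_le _
    | m + 1 => exact absurd (hs 0) (by simp)
  | cons x xs ih =>
    rintro i j m ⟨s, hs, hmono, hdec, hrange⟩
    match m with
    | 0 => exact Nat.zero_le _
    | m + 1 =>
      by_cases h0 : s 0 = 0
      · -- head of the subsequence is position 0
        have hcond : i ≤ bar x ∧ bar x < j := by
          have := hrange 0
          rw [show (x :: xs)[s (0 : Fin (m+1))]'(hs 0) = x by
            simp only [h0, List.getElem_cons_zero]] at this
          exact this
        have hpos : ∀ l : Fin m, 0 < s l.succ := by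
          intro l
          have := hmono (Fin.succ_pos l)
          omega
        have tail : HasDecrSubseq xs (sx x) j m := by
          refine ⟨fun l => s l.succ - 1, fun l => by
              have ha := hs l.succ; have hb := hpos l
              simp only [List.length_cons] at ha
              show s l.succ - 1 < xs.length; omega,
            ?_, ?_, ?_⟩
          · intro a b hab
            have h1 := hmono (Fin.succ_lt_succ_iff.mpr hab)
            have h2 := hpos a
            show s a.succ - 1 < s b.succ - 1
            omega
          · intro a b hab
            have h := hdec a.succ b.succ (Fin.succ_lt_succ_iff.mpr hab)
            rw [getElem_cons_pos x xs _ (hpos a), getElem_cons_pos x xs _ (hpos b)] at h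
            exact h
          · intro l
            have hr := hrange l.succ
            rw [getElem_cons_pos x xs _ (hpos l)] at hr
            refine ⟨?_, hr.2⟩
            -- the letter is < x since the subsequence is decreasing
            have hlt : (x :: xs)[s l.succ]'(hs l.succ) < (x :: xs)[s 0]'(hs 0) :=
              hdec 0 l.succ (Fin.succ_pos l)
            rw [getElem_cons_pos x xs _ (hpos l)] at hlt
            rw [show (x :: xs)[s (0 : Fin (m+1))]'(hs 0) = x by
              simp only [h0, List.getElem_cons_zero]] at hlt
            have := bar_lt_bar hlt
            simp only [Fin.le_def, Fin.lt_def, sx_val] at *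
            omega
        have := ih tail
        have heq : Nlen (x :: xs) i j = max (Nlen xs i j) (Nlen xs (sx x) j + 1) := by
          simp only [Nlen, if_pos hcond]
        omega
      · -- head not used
        have hpos : ∀ l : Fin (m + 1), 0 < s l := by
          intro l
          have := hmono.monotone (Fin.zero_le l)
          omega
        have tail : HasDecrSubseq xs i j (m + 1) := by
          refine ⟨fun l => s l - 1, fun l => by
              have ha := hs l; have hb := hpos l
              simp only [List.length_cons] at ha
              show s l - 1 < xs.length; omega,
            ?_, ?_, ?_⟩
          · intro a b hab
            have h1 := hmono hab
            have h2 := hpos a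
            show s a - 1 < s b - 1
            omega
          · intro a b hab
            have h := hdec a b hab
            rw [getElem_cons_pos x xs _ (hpos a), getElem_cons_pos x xs _ (hpos b)] at h
            exact h
          · intro l
            have hr := hrange l
            rw [getElem_cons_pos x xs _ (hpos l)] at hr
            exact hr
        exact le_trans (ih tail) (Nlen_cons_le x xs i j)

lemma hds_Nlen (w : List (Fin n)) : ∀ i j : Fin (n + 1), HasDecrSubseq w i j (Nlen w i j) := by
  induction w with
  | nil => intro i j; exact hds_zero [] i j
  | cons x xs ih =>
    intro i j
    by_cases hc : i ≤ bar x ∧ bar x < j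
    · have heq : Nlen (x :: xs) i j = max (Nlen xs i j) (Nlen xs (sx x) j + 1) := by
        simp only [Nlen, if_pos hc]
      rw [heq]
      rcases Nat.le_total (Nlen xs i j) (Nlen xs (sx x) j + 1) with h | h
      · rw [max_eq_right h]
        exact hds_cons_head hc.1 hc.2 (ih (sx x) j)
      · rw [max_eq_left h]
        exact hds_cons x (ih i j)
    · have heq : Nlen (x :: xs) i j = Nlen xs i j := by simp only [Nlen, if_neg hc]
      rw [heq]
      exact hds_cons x (ih i j)

lemma hasL_of_hds {w : List (Fin n)} {i j : Fin (n + 1)} {m : ℕ} (hm : 1 ≤ m)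
    (h : HasDecrSubseq w i j m) : hasL w i j := by
  obtain ⟨s, hs, -, -, hrange⟩ := h
  have l0 : Fin m := ⟨0, hm⟩
  exact ⟨w[s l0]'(hs l0), List.getElem_mem _, hrange l0⟩

lemma hasL_iff {w : List (Fin n)} {i j : Fin (n + 1)} :
    hasL w i j ↔ ∃ (l : ℕ) (hl : l < w.length), i ≤ bar (w[l]'hl) ∧ bar (w[l]'hl) < j := by
  constructor
  · rintro ⟨a, ha, h1, h2⟩
    obtain ⟨l, hl, rfl⟩ := List.mem_iff_getElem.mp ha
    exact ⟨l, hl, h1, h2⟩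
  · rintro ⟨l, hl, h1, h2⟩
    exact ⟨w[l]'hl, List.getElem_mem _, h1, h2⟩

end RhoAux
/-- For `1 ≤ i < j ≤ n+1` and `k ≥ 1`, the entry `ρ_n(w)_{i,j}` equals `k` iff `k`
is the maximum length of a strictly decreasing subsequence of `w` using only letters `a` with
`i ≤ ā < j`; and it equals `-∞` iff `w` has no letter `a` with `i ≤ ā < j`. -/
theorem rho_entry_characterization
    (n : ℕ) (hn : 1 ≤ n) (w : List (Fin n)) (i j : Fin (n + 1)) (hij : i < j)
    (k : ℕ) (hk : 1 ≤ k) :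
    (rhoList w i j = ((k : ℝ) : Trop) ↔
      HasDecrSubseq w i j k ∧ ∀ m : ℕ, HasDecrSubseq w i j m → m ≤ k) ∧
    (rhoList w i j = ⊥ ↔
      ∀ (l : ℕ) (hl : l < w.length), ¬ (i ≤ bar (w[l]'hl) ∧ bar (w[l]'hl) < j)) := by
  constructor
  · rw [RhoAux.rho_eq_val]
    by_cases hh : RhoAux.hasL w i j
    · rw [RhoAux.val_coe hij hh]
      have hcast : (((RhoAux.Nlen w i j : ℝ)) : Trop) = ((k : ℝ) : Trop) ↔
          RhoAux.Nlen w i j = k := by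
        rw [WithBot.coe_inj, Nat.cast_inj]
      rw [hcast]
      constructor
      · rintro rfl
        exact ⟨RhoAux.hds_Nlen w i j, fun m hm => RhoAux.hds_le_Nlen hm⟩
      · rintro ⟨h1, h2⟩
        exact le_antisymm (h2 _ (RhoAux.hds_Nlen w i j)) (RhoAux.hds_le_Nlen h1)
    · rw [RhoAux.val_bot hij hh]
      exact iff_of_false (by simp) (fun ⟨h1, _⟩ => hh (RhoAux.hasL_of_hds hk h1))
  · rw [RhoAux.rho_eq_val]
    by_cases hh : RhoAux.hasL w i j
    · rw [RhoAux.val_coe hij hh]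
      refine iff_of_false (by simp) ?_
      intro hall
      obtain ⟨l, hl, hc⟩ := RhoAux.hasL_iff.mp hh
      exact hall l hl hc
    · rw [RhoAux.val_bot hij hh]
      refine iff_of_true rfl ?_
      intro l hl hc
      exact hh (RhoAux.hasL_iff.mpr ⟨l, hl, hc⟩)
end

section
/- Let n ≥ 1 and let w be a word over 𝒜_n. Then every entry of the matrix ρ_n(w) is at most n, i.e. ρ_n(w)_{i,j} ≤ n for all 1 ≤ i, j ≤ n+1. -/
lemma letterMat_le {n : ℕ} (x : Fin n) (i j : Fin (n + 1)) :
    letterMat x i j ≤ (((j : ℝ) - (i : ℝ)) : Trop) := by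
  unfold letterMat
  split_ifs with h1 h2
  · subst h1
    simp
  · obtain ⟨ha, hb⟩ := h2
    have : (i : ℕ) + 1 ≤ (j : ℕ) := by
      have := lt_of_le_of_lt ha hb
      exact Fin.lt_iff_val_lt_val.mp this
    have : (1 : ℝ) ≤ (j : ℝ) - (i : ℝ) := by
      have : ((i : ℕ) : ℝ) + 1 ≤ ((j : ℕ) : ℝ) := by exact_mod_cast this
      linarith
    exact_mod_cast WithBot.coe_le_coe.mpr this
  · exact bot_le

lemma rhoList_le {n : ℕ} (w : List (Fin n)) (i j : Fin (n + 1)) :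
    rhoList w i j ≤ (((j : ℝ) - (i : ℝ)) : Trop) := by
  induction w generalizing i j with
  | nil =>
    unfold rhoList tropId
    split_ifs with h
    · subst h; simp
    · exact bot_le
  | cons x xs ih =>
    show tmul (letterMat x) (rhoList xs) i j ≤ _
    unfold tmul
    apply Finset.sup_le
    intro k _
    calc letterMat x i k + rhoList xs k j
        ≤ (((k : ℝ) - (i : ℝ)) : Trop) + (((j : ℝ) - (k : ℝ)) : Trop) :=
          add_le_add (letterMat_le x i k) (ih k j)
      _ = (((j : ℝ) - (i : ℝ)) : Trop) := by
          rw [← WithBot.coe_add]; ring_nf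

/-- Every entry of `ρ_n(w)` is at most `n`. -/
theorem rho_entry_le (n : ℕ) (hn : 1 ≤ n) (w : List (Fin n)) (i j : Fin (n + 1)) :
    rhoList w i j ≤ ((n : ℝ) : Trop) := by
  refine le_trans (rhoList_le w i j) ?_
  have hj : (j : ℕ) ≤ n := by omega
  have : ((j : ℝ) - (i : ℝ)) ≤ (n : ℝ) := by
    have h1 : ((j : ℕ) : ℝ) ≤ (n : ℝ) := by exact_mod_cast hj
    have h2 : (0 : ℝ) ≤ ((i : ℕ) : ℝ) := by positivity
    linarith
  exact_mod_cast WithBot.coe_le_coe.mpr this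
end

section
/- Let n ≥ 1 and let w be a word over 𝒜_n. Any two finite adjacent entries of ρ_n(w) differ by at most 1, the entries weakly increase along rows and weakly decrease down columns: for indices 1 ≤ i ≤ j ≤ n+1, if ρ_n(w)_{i,j} and ρ_n(w)_{i+1,j} are both finite then ρ_n(w)_{i+1,j} ≤ ρ_n(w)_{i,j} ≤ ρ_n(w)_{i+1,j} + 1, and if ρ_n(w)_{i,j} and ρ_n(w)_{i,j+1} are both finite then ρ_n(w)_{i,j} ≤ ρ_n(w)_{i,j+1} ≤ ρ_n(w)_{i,j} + 1. -/
/-! ### Auxiliary development for Statement 3 -/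

/-- The length of the longest strictly decreasing subsequence of `w` whose letters `a`
satisfy `i ≤ (bar a).val < j`, computed recursively. -/
def Dlen {n : ℕ} : List (Fin n) → ℕ → ℕ → ℕ
  | [], _, _ => 0
  | x :: xs, i, j =>
    max (Dlen xs i j)
      (if i ≤ (bar x).val ∧ (bar x).val < j then Dlen xs ((bar x).val + 1) j + 1 else 0)

lemma Dlen_zero {n : ℕ} (w : List (Fin n)) : ∀ {i j : ℕ}, j ≤ i → Dlen w i j = 0 := by
  induction w with
  | nil => intro i j _; rfl
  | cons x xs ih =>
    intro i j h
    simp only [Dlen]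
    rw [ih h]
    have : ¬(i ≤ (bar x).val ∧ (bar x).val < j) := by omega
    simp [this]

lemma Dlen_anti {n : ℕ} (w : List (Fin n)) :
    ∀ {i i' j : ℕ}, i ≤ i' → Dlen w i' j ≤ Dlen w i j := by
  induction w with
  | nil => intros; exact le_refl _
  | cons x xs ih =>
    intro i i' j h
    simp only [Dlen]
    apply max_le_max (ih h)
    by_cases hc : i' ≤ (bar x).val ∧ (bar x).val < j
    · have hc' : i ≤ (bar x).val ∧ (bar x).val < j := ⟨le_trans h hc.1, hc.2⟩
      simp [hc, hc']
    · simp [hc]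

lemma Dlen_mono {n : ℕ} (w : List (Fin n)) :
    ∀ {i j j' : ℕ}, j ≤ j' → Dlen w i j ≤ Dlen w i j' := by
  induction w with
  | nil => intros; exact le_refl _
  | cons x xs ih =>
    intro i j j' h
    simp only [Dlen]
    apply max_le_max (ih h)
    by_cases hc : i ≤ (bar x).val ∧ (bar x).val < j
    · have hc' : i ≤ (bar x).val ∧ (bar x).val < j' := ⟨hc.1, lt_of_lt_of_le hc.2 h⟩
      simp only [hc, hc', if_true]
      exact Nat.succ_le_succ (ih h)
    · simp [hc]

lemma Dlen_succ_left {n : ℕ} (w : List (Fin n)) :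
    ∀ (i j : ℕ), Dlen w i j ≤ Dlen w (i + 1) j + 1 := by
  induction w with
  | nil => intros; exact Nat.zero_le _
  | cons x xs ih =>
    intro i j
    simp only [Dlen]
    apply max_le
    · exact le_trans (ih i j) (Nat.succ_le_succ (le_max_left _ _))
    · by_cases hc : i ≤ (bar x).val ∧ (bar x).val < j
      · rw [if_pos hc]
        by_cases hb : i = (bar x).val
        · subst hb
          exact Nat.succ_le_succ (le_max_left _ _)
        · have hc' : i + 1 ≤ (bar x).val ∧ (bar x).val < j := ⟨by omega, hc.2⟩
          rw [show (if i + 1 ≤ (bar x).val ∧ (bar x).val < j then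
              Dlen xs ((bar x).val + 1) j + 1 else 0) = Dlen xs ((bar x).val + 1) j + 1
              from if_pos hc'] at *
          exact le_trans (le_max_right _ _) (Nat.le_succ _)
      · rw [if_neg hc]; exact Nat.zero_le _

lemma Dlen_succ_right {n : ℕ} (w : List (Fin n)) :
    ∀ (i j : ℕ), Dlen w i (j + 1) ≤ Dlen w i j + 1 := by
  induction w with
  | nil => intros; exact Nat.zero_le _
  | cons x xs ih =>
    intro i j
    simp only [Dlen]
    apply max_le
    · exact le_trans (ih i j) (Nat.succ_le_succ (le_max_left _ _))
    · by_cases hc : i ≤ (bar x).val ∧ (bar x).val < j + 1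
      · rw [if_pos hc]
        by_cases hb : (bar x).val < j
        · have hc' : i ≤ (bar x).val ∧ (bar x).val < j := ⟨hc.1, hb⟩
          rw [show (if i ≤ (bar x).val ∧ (bar x).val < j then
              Dlen xs ((bar x).val + 1) j + 1 else 0) = Dlen xs ((bar x).val + 1) j + 1
              from if_pos hc']
          have := ih ((bar x).val + 1) j
          have hle : Dlen xs ((bar x).val + 1) (j + 1) + 1 ≤ (Dlen xs ((bar x).val + 1) j + 1) + 1 := by
            omega
          exact le_trans hle (Nat.succ_le_succ (le_max_right _ _))
        · have hbj : (bar x).val = j := by omega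
          have : Dlen xs ((bar x).val + 1) (j + 1) = 0 := Dlen_zero xs (by omega)
          rw [this]
          exact Nat.succ_le_succ (Nat.zero_le _)
      · rw [if_neg hc]; exact Nat.zero_le _

/-- The closed form of the entries of `ρ_n(w)`. -/
def Ent {n : ℕ} (w : List (Fin n)) (i j : Fin (n + 1)) : Trop :=
  if i = j then 0
  else if i < j ∧ Dlen w i.val j.val ≠ 0 then ((Dlen w i.val j.val : ℕ) : Trop) else ⊥

lemma trop_natCast (d : ℕ) : ((d : ℕ) : Trop) = ((d : ℝ) : Trop) :=
  (WithBot.coe_natCast d).symm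

lemma trop_natCast_le {d e : ℕ} (h : d ≤ e) : ((d : ℕ) : Trop) ≤ ((e : ℕ) : Trop) := by
  rw [trop_natCast, trop_natCast]
  exact_mod_cast h

lemma trop_one_add_natCast (d : ℕ) : (1 : Trop) + ((d : ℕ) : Trop) = ((d + 1 : ℕ) : Trop) := by
  rw [add_comm, trop_natCast, trop_natCast,
    show ((1 : Trop)) = ((1 : ℝ) : Trop) from rfl, ← WithBot.coe_add]
  norm_num

lemma Dlen_cons_le {n : ℕ} (x : Fin n) (xs : List (Fin n)) (i j : ℕ) :
    Dlen xs i j ≤ Dlen (x :: xs) i j := le_max_left _ _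

lemma Ent_cons_le {n : ℕ} (x : Fin n) (xs : List (Fin n)) (i j : Fin (n + 1)) :
    Ent xs i j ≤ Ent (x :: xs) i j := by
  unfold Ent
  by_cases hij : i = j
  · simp [hij]
  · rw [if_neg hij, if_neg hij]
    by_cases h2 : i < j ∧ Dlen xs i.val j.val ≠ 0
    · rw [if_pos h2]
      have hle := Dlen_cons_le x xs i.val j.val
      have h2' : i < j ∧ Dlen (x :: xs) i.val j.val ≠ 0 := ⟨h2.1, by omega⟩
      rw [if_pos h2']
      exact trop_natCast_le hle
    · rw [if_neg h2]; exact bot_le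

lemma letterMat_term_le {n : ℕ} (x : Fin n) (xs : List (Fin n)) (i k j : Fin (n + 1)) :
    letterMat x i k + Ent xs k j ≤ Ent (x :: xs) i j := by
  by_cases hik : i = k
  · subst hik
    have : letterMat x i i = 0 := by simp [letterMat]
    rw [this, zero_add]
    exact Ent_cons_le x xs i j
  · simp only [letterMat, if_neg hik]
    by_cases hc : i ≤ bar x ∧ bar x < k
    · rw [if_pos hc]
      have hik' : i.val ≤ (bar x).val ∧ (bar x).val < k.val := ⟨hc.1, hc.2⟩
      by_cases hkj : k = j
      · subst hkj
        have hEnt : Ent xs k k = 0 := by simp [Ent]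
        rw [hEnt, add_zero]
        -- goal : (1 : Trop) ≤ Ent (x :: xs) i k
        have hcond : i.val ≤ (bar x).val ∧ (bar x).val < k.val := hik'
        have hD : Dlen (x :: xs) i.val k.val ≠ 0 := by
          have : Dlen xs ((bar x).val + 1) k.val + 1 ≤ Dlen (x :: xs) i.val k.val := by
            simp only [Dlen]
            rw [if_pos hcond]
            exact le_max_right _ _
          omega
        have hij : i < k := lt_of_le_of_lt hc.1 hc.2
        have : Ent (x :: xs) i k = ((Dlen (x :: xs) i.val k.val : ℕ) : Trop) := by
          unfold Ent
          rw [if_neg (ne_of_lt hij), if_pos ⟨hij, hD⟩]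
        rw [this]
        have h1 : (1 : Trop) = ((1 : ℕ) : Trop) := by
          rw [trop_natCast]; norm_num
        rw [h1]
        exact trop_natCast_le (by omega)
      · by_cases hkj2 : k < j ∧ Dlen xs k.val j.val ≠ 0
        · have hEnt : Ent xs k j = ((Dlen xs k.val j.val : ℕ) : Trop) := by
            unfold Ent; rw [if_neg hkj, if_pos hkj2]
          rw [hEnt, trop_one_add_natCast]
          have hcond : i.val ≤ (bar x).val ∧ (bar x).val < j.val :=
            ⟨hik'.1, lt_of_lt_of_le hik'.2 (le_of_lt hkj2.1)⟩
          have hchain : Dlen xs k.val j.val + 1 ≤ Dlen (x :: xs) i.val j.val := by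
            have h1 : Dlen xs k.val j.val ≤ Dlen xs ((bar x).val + 1) j.val :=
              Dlen_anti xs (by omega)
            have h2 : Dlen xs ((bar x).val + 1) j.val + 1 ≤ Dlen (x :: xs) i.val j.val := by
              simp only [Dlen]; rw [if_pos hcond]; exact le_max_right _ _
            omega
          have hij : i < j := lt_of_le_of_lt hc.1 (lt_of_lt_of_le hc.2 (le_of_lt hkj2.1))
          have : Ent (x :: xs) i j = ((Dlen (x :: xs) i.val j.val : ℕ) : Trop) := by
            unfold Ent
            rw [if_neg (ne_of_lt hij), if_pos ⟨hij, by omega⟩]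
          rw [this]
          exact trop_natCast_le hchain
        · have hEnt : Ent xs k j = ⊥ := by
            unfold Ent; rw [if_neg hkj, if_neg hkj2]
          rw [hEnt, WithBot.add_bot]
          exact bot_le
    · rw [if_neg hc, WithBot.bot_add]
      exact bot_le

lemma rho_eq_ent {n : ℕ} (w : List (Fin n)) : ∀ i j, rhoList w i j = Ent w i j := by
  induction w with
  | nil =>
    intro i j
    unfold rhoList tropId Ent Dlen
    by_cases hij : i = j <;> simp [hij]
  | cons x xs ih =>
    intro i j
    show tmul (letterMat x) (rhoList xs) i j = Ent (x :: xs) i j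
    unfold tmul
    have hfun : (fun k => letterMat x i k + rhoList xs k j)
        = fun k => letterMat x i k + Ent xs k j := by
      funext k; rw [ih]
    rw [hfun]
    apply le_antisymm
    · exact Finset.sup_le fun k _ => letterMat_term_le x xs i k j
    · -- Ent (x :: xs) i j ≤ sup
      by_cases hij : i = j
      · subst hij
        have : Ent (x :: xs) i i = 0 := by simp [Ent]
        rw [this]
        have hterm : letterMat x i i + Ent xs i i = 0 := by
          simp [letterMat, Ent]
        calc (0 : Trop) = letterMat x i i + Ent xs i i := hterm.symm
          _ ≤ _ := Finset.le_sup (f := fun k => letterMat x i k + Ent xs k i) (Finset.mem_univ i)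
      · by_cases h2 : i < j ∧ Dlen (x :: xs) i.val j.val ≠ 0
        · have hEnt : Ent (x :: xs) i j = ((Dlen (x :: xs) i.val j.val : ℕ) : Trop) := by
            unfold Ent; rw [if_neg hij, if_pos h2]
          rw [hEnt]
          set A := Dlen xs i.val j.val with hA
          set B := (if i.val ≤ (bar x).val ∧ (bar x).val < j.val then
            Dlen xs ((bar x).val + 1) j.val + 1 else 0) with hB
          have hD : Dlen (x :: xs) i.val j.val = max A B := rfl
          by_cases hAB : B ≤ A
          · have hDA : Dlen (x :: xs) i.val j.val = A := by rw [hD]; omega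
            have hA0 : A ≠ 0 := by omega
            have hterm : letterMat x i i + Ent xs i j = ((A : ℕ) : Trop) := by
              have h1 : letterMat x i i = 0 := by simp [letterMat]
              have h2' : Ent xs i j = ((A : ℕ) : Trop) := by
                unfold Ent; rw [if_neg hij, if_pos ⟨h2.1, hA0⟩]
              rw [h1, h2', zero_add]
            rw [hDA]
            calc ((A : ℕ) : Trop) = letterMat x i i + Ent xs i j := hterm.symm
              _ ≤ _ := Finset.le_sup (f := fun k => letterMat x i k + Ent xs k j) (Finset.mem_univ i)
          · have hDB : Dlen (x :: xs) i.val j.val = B := by rw [hD]; omega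
            have hB0 : B ≠ 0 := by omega
            have hcond : i.val ≤ (bar x).val ∧ (bar x).val < j.val := by
              by_contra hc; rw [hB, if_neg hc] at hB0; exact hB0 rfl
            have hBval : B = Dlen xs ((bar x).val + 1) j.val + 1 := by
              rw [hB, if_pos hcond]
            set d' := Dlen xs ((bar x).val + 1) j.val with hd'
            have hcondF : i ≤ bar x ∧ bar x < j := ⟨hcond.1, hcond.2⟩
            by_cases hd0 : d' = 0
            · -- use k = j
              have hterm : letterMat x i j + Ent xs j j = (1 : Trop) := by
                have h1 : letterMat x i j = 1 := by
                  simp only [letterMat, if_neg hij]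
                  rw [if_pos hcondF]
                have h2' : Ent xs j j = 0 := by simp [Ent]
                rw [h1, h2', add_zero]
              rw [hDB, hBval, hd0]
              have h1 : ((0 + 1 : ℕ) : Trop) = (1 : Trop) := by
                rw [trop_natCast]; norm_num
              rw [h1]
              calc (1 : Trop) = letterMat x i j + Ent xs j j := hterm.symm
                _ ≤ _ := Finset.le_sup (f := fun k => letterMat x i k + Ent xs k j) (Finset.mem_univ j)
            · -- use k = bar x + 1
              have hbj : (bar x).val + 1 ≤ j.val := hcond.2
              have hklt : (bar x).val + 1 < n + 1 := lt_of_le_of_lt hbj j.isLt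
              set k : Fin (n + 1) := ⟨(bar x).val + 1, hklt⟩ with hk
              have hik : i ≠ k := by
                intro h; apply absurd hcond.1; rw [h]; simp [hk]
              have hkjne : k ≠ j := by
                intro h
                apply hd0
                rw [hd']
                have : (bar x).val + 1 = j.val := by rw [← h]
                rw [this]
                exact Dlen_zero xs le_rfl
              have hkj : k < j := lt_of_le_of_ne (by exact hbj) hkjne
              have hterm : letterMat x i k + Ent xs k j = ((d' + 1 : ℕ) : Trop) := by
                have h1 : letterMat x i k = 1 := by
                  simp only [letterMat, if_neg hik]
                  rw [if_pos ⟨hcond.1, by simp [hk, Fin.lt_def]⟩]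
                have h2' : Ent xs k j = ((d' : ℕ) : Trop) := by
                  unfold Ent
                  rw [if_neg hkjne, if_pos ⟨hkj, hd0⟩]
                rw [h1, h2', trop_one_add_natCast]
              rw [hDB, hBval]
              calc ((d' + 1 : ℕ) : Trop) = letterMat x i k + Ent xs k j := hterm.symm
                _ ≤ _ := Finset.le_sup (f := fun k' => letterMat x i k' + Ent xs k' j) (Finset.mem_univ k)
        · have hEnt : Ent (x :: xs) i j = ⊥ := by
            unfold Ent; rw [if_neg hij, if_neg h2]
          rw [hEnt]; exact bot_le

lemma Ent_ne_bot {n : ℕ} {w : List (Fin n)} {i j : Fin (n + 1)} (h : Ent w i j ≠ ⊥) :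
    i = j ∨ (i < j ∧ Dlen w i.val j.val ≠ 0) := by
  by_cases h1 : i = j
  · exact Or.inl h1
  · by_cases h2 : i < j ∧ Dlen w i.val j.val ≠ 0
    · exact Or.inr h2
    · exfalso; apply h; unfold Ent; rw [if_neg h1, if_neg h2]

lemma Ent_diag {n : ℕ} (w : List (Fin n)) (i : Fin (n + 1)) : Ent w i i = 0 := by
  simp [Ent]

lemma Ent_pos {n : ℕ} (w : List (Fin n)) {i j : Fin (n + 1)} (h1 : i < j)
    (h2 : Dlen w i.val j.val ≠ 0) :
    Ent w i j = ((Dlen w i.val j.val : ℕ) : Trop) := by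
  unfold Ent; rw [if_neg (ne_of_lt h1), if_pos ⟨h1, h2⟩]

lemma trop_natCast_add_one (d : ℕ) : ((d : ℕ) : Trop) + 1 = ((d + 1 : ℕ) : Trop) := by
  rw [add_comm]; exact trop_one_add_natCast d

lemma trop_zero : ((0 : ℕ) : Trop) = 0 := Nat.cast_zero

lemma trop_one : ((1 : ℕ) : Trop) = 1 := Nat.cast_one

/-- Finite adjacent entries of `ρ_n(w)` differ by at most 1; entries weakly
increase along rows and weakly decrease down columns. -/
theorem rho_adjacent_entries
    (n : ℕ) (hn : 1 ≤ n) (w : List (Fin n)) (i j : Fin (n + 1)) (hij : i ≤ j) :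
    (∀ (h : i.val + 1 < n + 1),
      rhoList w i j ≠ ⊥ → rhoList w ⟨i.val + 1, h⟩ j ≠ ⊥ →
        rhoList w ⟨i.val + 1, h⟩ j ≤ rhoList w i j ∧
        rhoList w i j ≤ rhoList w ⟨i.val + 1, h⟩ j + 1) ∧
    (∀ (h : j.val + 1 < n + 1),
      rhoList w i j ≠ ⊥ → rhoList w i ⟨j.val + 1, h⟩ ≠ ⊥ →
        rhoList w i j ≤ rhoList w i ⟨j.val + 1, h⟩ ∧
        rhoList w i ⟨j.val + 1, h⟩ ≤ rhoList w i j + 1) := by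
  constructor
  · intro h hne hne'
    set i' : Fin (n + 1) := ⟨i.val + 1, h⟩ with hi'
    simp only [rho_eq_ent w] at hne hne' ⊢
    have hii' : i < i' := by simp [hi', Fin.lt_def]
    rcases Ent_ne_bot hne' with h1 | h1
    · -- i' = j
      have hij' : i < j := h1 ▸ hii'
      rcases Ent_ne_bot hne with h0 | h0
      · exact absurd h0 (ne_of_lt hij')
      · have hD1 : Dlen w i.val j.val ≤ 1 := by
          have e1 := Dlen_succ_left w i.val j.val
          have e2 : Dlen w (i.val + 1) j.val = 0 := by
            have : i.val + 1 = j.val := by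
              have := congrArg Fin.val h1; simpa [hi'] using this
            rw [this]; exact Dlen_zero w le_rfl
          omega
        have hz : Ent w i' j = 0 := by rw [h1]; exact Ent_diag w j
        rw [Ent_pos w h0.1 h0.2, hz]
        constructor
        · rw [← trop_zero]
          exact trop_natCast_le (Nat.zero_le _)
        · rw [zero_add, ← trop_one]
          exact trop_natCast_le hD1
    · -- i' < j
      have hij : i < j := lt_trans hii' h1.1
      rcases Ent_ne_bot hne with h0 | h0
      · exact absurd h0 (ne_of_lt hij)
      · have hval : i'.val = i.val + 1 := rfl
        rw [Ent_pos w h0.1 h0.2, Ent_pos w h1.1 h1.2, hval]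
        constructor
        · exact trop_natCast_le (Dlen_anti w (Nat.le_succ i.val))
        · rw [trop_natCast_add_one]
          exact trop_natCast_le (Dlen_succ_left w i.val j.val)
  · intro h hne hne'
    set j' : Fin (n + 1) := ⟨j.val + 1, h⟩ with hj'
    simp only [rho_eq_ent w] at hne hne' ⊢
    have hjj' : j < j' := by simp [hj', Fin.lt_def]
    have hij' : i < j' := lt_of_le_of_lt hij hjj'
    have hvalj : j'.val = j.val + 1 := rfl
    rcases Ent_ne_bot hne' with h1 | h1
    · exact absurd h1 (ne_of_lt hij')
    rcases Ent_ne_bot hne with h0 | h0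
    · -- i = j
      have hE1 : Dlen w i.val j'.val ≤ 1 := by
        have e1 := Dlen_succ_right w i.val j.val
        have e2 : Dlen w i.val j.val = 0 := by
          rw [← h0]; exact Dlen_zero w le_rfl
        rw [hvalj]
        omega
      have hz : Ent w i j = 0 := by rw [h0]; exact Ent_diag w j
      rw [Ent_pos w h1.1 h1.2, hz]
      constructor
      · rw [← trop_zero]
        exact trop_natCast_le (Nat.zero_le _)
      · rw [zero_add, ← trop_one]
        exact trop_natCast_le hE1
    · rw [Ent_pos w h0.1 h0.2, Ent_pos w h1.1 h1.2, hvalj]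
      constructor
      · exact trop_natCast_le (Dlen_mono w (Nat.le_succ j.val))
      · rw [trop_natCast_add_one]
        exact trop_natCast_le (Dlen_succ_right w i.val j.val)
end

section
/- Let n ≥ 1. For all words u, v over 𝒜_n, if u ≡_styl v then ρ_n(u) = ρ_n(v); consequently ρ_n induces a well-defined monoid homomorphism ϱ_n : styl_n → U_{n+1}(𝕋). -/
section helpers
variable {m : ℕ}

lemma sup_add_left (c : Trop) (f : Fin m → Trop) (s : Finset (Fin m)) :
    s.sup (fun k => c + f k) = c + s.sup f := by
  induction s using Finset.induction with
  | empty => simp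
  | insert _ _ h ih => simp only [Finset.sup_insert, ih]; exact max_add_add_left c _ _

lemma sup_add_right (c : Trop) (f : Fin m → Trop) (s : Finset (Fin m)) :
    s.sup (fun k => f k + c) = s.sup f + c := by
  induction s using Finset.induction with
  | empty => simp
  | insert _ _ h ih => simp only [Finset.sup_insert, ih]; exact max_add_add_right _ _ c

lemma sup_split (f g : Fin m → Trop) (s : Finset (Fin m)) :
    s.sup (fun k => f k ⊔ g k) = s.sup f ⊔ s.sup g := by
  have := Finset.sup_sup (s := s) (f := f) (g := g)
  simpa [Pi.sup_def] using this

lemma sup_ite_eq (i : Fin m) (g : Fin m → Trop) :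
    Finset.univ.sup (fun k => if k = i then g k else ⊥) = g i := by
  apply le_antisymm
  · exact Finset.sup_le fun k _ => by split <;> simp_all
  · exact le_trans (by simp) (Finset.le_sup (Finset.mem_univ i))

lemma sup_ite_const (P : Fin m → Prop) [DecidablePred P] (v : Trop) :
    Finset.univ.sup (fun k => if P k then v else ⊥) = if ∃ k, P k then v else ⊥ := by
  apply le_antisymm
  · apply Finset.sup_le
    intro k _
    by_cases h : P k
    · simp only [h, if_true]
      rw [if_pos ⟨k, h⟩]
    · simp [h]
  · split
    · next h =>
      obtain ⟨k, hk⟩ := h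
      exact le_trans (by simp [hk]) (Finset.le_sup (Finset.mem_univ k))
    · simp
end helpers

section structure_lemmas
variable {n : ℕ}

/-- supremum of a column of `A` below row `t` (exclusive). -/
def colsup {m : ℕ} (A : Matrix (Fin m) (Fin m) Trop) (t j : Fin m) : Trop :=
  Finset.univ.sup fun k => if t < k then A k j else ⊥

lemma letterMat_eq (x : Fin n) (i j : Fin (n+1)) :
    letterMat x i j = (if i = j then (0:Trop) else ⊥) ⊔ (if i ≤ bar x ∧ bar x < j then 1 else ⊥) := by
  unfold letterMat
  by_cases h : i = j
  · subst h
    have : ¬ (i ≤ bar x ∧ bar x < i) := fun ⟨h1, h2⟩ => absurd (lt_of_le_of_lt h1 h2) (lt_irrefl i)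
    simp [this]
  · simp [h]

lemma tmul_letter_left (x : Fin n) (A : Matrix (Fin (n+1)) (Fin (n+1)) Trop) (i j : Fin (n+1)) :
    tmul (letterMat x) A i j
      = A i j ⊔ (if i ≤ bar x then 1 + colsup A (bar x) j else ⊥) := by
  unfold tmul
  have key : ∀ k : Fin (n+1), letterMat x i k + A k j
      = (if k = i then A i j else ⊥) ⊔ (if i ≤ bar x ∧ bar x < k then 1 + A k j else ⊥) := by
    intro k
    rw [letterMat_eq]
    by_cases h1 : i = k
    · subst h1
      have : ¬ (i ≤ bar x ∧ bar x < i) := fun ⟨h1, h2⟩ => absurd (lt_of_le_of_lt h1 h2) (lt_irrefl i)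
      simp [this]
    · by_cases h2 : i ≤ bar x ∧ bar x < k
      · simp [h1, Ne.symm h1, h2]
      · simp [h1, Ne.symm h1, h2]
  simp only [key]
  rw [sup_split, sup_ite_eq]
  congr 1
  by_cases h : i ≤ bar x
  · simp only [h, true_and, if_true]
    rw [show (fun k => if bar x < k then (1:Trop) + A k j else ⊥)
        = fun k => 1 + (if bar x < k then A k j else ⊥) from funext fun k => by split <;> simp]
    exact sup_add_left _ _ _
  · simp only [h, false_and, if_false]
    simp

lemma colsup_tmul_letter (x : Fin n) (A : Matrix (Fin (n+1)) (Fin (n+1)) Trop) (t j : Fin (n+1)) :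
    colsup (tmul (letterMat x) A) t j
      = colsup A t j ⊔ (if t < bar x then 1 + colsup A (bar x) j else ⊥) := by
  unfold colsup
  have key : ∀ k : Fin (n+1), (if t < k then tmul (letterMat x) A k j else ⊥)
      = (if t < k then A k j else ⊥) ⊔ (if t < k ∧ k ≤ bar x then 1 + colsup A (bar x) j else ⊥) := by
    intro k
    rw [tmul_letter_left]
    by_cases h1 : t < k
    · by_cases h2 : k ≤ bar x <;> simp [h1, h2]
    · simp [h1]
  simp only [key]
  rw [sup_split]
  congr 1
  rw [show (fun k => if t < k ∧ k ≤ bar x then (1:Trop) + colsup A (bar x) j else ⊥)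
      = fun k => if (fun k => t < k ∧ k ≤ bar x) k then (1:Trop) + colsup A (bar x) j else ⊥ from rfl]
  rw [sup_ite_const]
  congr 1
  simp only [eq_iff_iff]
  constructor
  · rintro ⟨k, hk1, hk2⟩; exact lt_of_lt_of_le hk1 hk2
  · intro h; exact ⟨bar x, h, le_refl _⟩

lemma colsup_letterMat (y : Fin n) (t j : Fin (n+1)) :
    colsup (letterMat y) t j
      = (if t < j then (0:Trop) else ⊥) ⊔ (if t < bar y ∧ bar y < j then 1 else ⊥) := by
  unfold colsup
  have key : ∀ k : Fin (n+1), (if t < k then letterMat y k j else ⊥)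
      = (if t < k ∧ k = j then (0:Trop) else ⊥) ⊔ (if t < k ∧ k ≤ bar y ∧ bar y < j then 1 else ⊥) := by
    intro k
    rw [letterMat_eq]
    by_cases h1 : t < k
    · by_cases h2 : k = j
      · subst h2
        have : ¬ (k ≤ bar y ∧ bar y < k) := fun ⟨a, b⟩ => absurd (lt_of_le_of_lt a b) (lt_irrefl k)
        simp [h1, this]
      · by_cases h3 : k ≤ bar y ∧ bar y < j <;> simp [h1, h2, h3]
    · simp [h1]
  simp only [key]
  rw [sup_split, sup_ite_const, sup_ite_const]
  congr 1
  · congr 1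
    simp only [eq_iff_iff]
    constructor
    · rintro ⟨k, hk, rfl⟩; exact hk
    · intro h; exact ⟨j, h, rfl⟩
  · congr 1
    simp only [eq_iff_iff]
    constructor
    · rintro ⟨k, hk1, hk2, hk3⟩; exact ⟨lt_of_lt_of_le hk1 hk2, hk3⟩
    · rintro ⟨h1, h2⟩; exact ⟨bar y, h1, le_refl _, h2⟩

end structure_lemmas

section idassoc
variable {m : ℕ}

lemma tmul_id_right (A : Matrix (Fin m) (Fin m) Trop) : tmul A (tropId m) = A := by
  funext i j
  unfold tmul tropId
  have key : ∀ k : Fin m, (A i k + if k = j then (0:Trop) else ⊥) = if k = j then A i j else ⊥ := by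
    intro k
    by_cases h : k = j
    · subst h; simp
    · simp [h]
  simp only [key]
  exact sup_ite_eq j _

lemma tmul_id_left (A : Matrix (Fin m) (Fin m) Trop) : tmul (tropId m) A = A := by
  funext i j
  unfold tmul tropId
  have key : ∀ k : Fin m, ((if i = k then (0:Trop) else ⊥) + A k j) = if k = i then A i j else ⊥ := by
    intro k
    by_cases h : k = i
    · subst h; simp
    · simp [h, Ne.symm h]
  simp only [key]
  exact sup_ite_eq i _

lemma tmul_assoc (A B C : Matrix (Fin m) (Fin m) Trop) :
    tmul (tmul A B) C = tmul A (tmul B C) := by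
  funext i j
  unfold tmul
  calc (Finset.univ.sup fun k => (Finset.univ.sup fun l => A i l + B l k) + C k j)
      = Finset.univ.sup fun k => Finset.univ.sup fun l => (A i l + B l k) + C k j := by
        refine Finset.sup_congr rfl fun k _ => ?_
        exact (sup_add_right (C k j) _ _).symm
    _ = Finset.univ.sup fun l => Finset.univ.sup fun k => A i l + (B l k + C k j) := by
        rw [Finset.sup_comm]
        simp only [add_assoc]
    _ = Finset.univ.sup fun l => A i l + Finset.univ.sup fun k => (B l k + C k j) := by
        refine Finset.sup_congr rfl fun l _ => ?_
        exact sup_add_left (A i l) _ _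
end idassoc

section distrib
lemma one_add_sup (a b : Trop) : 1 + (a ⊔ b) = (1+a) ⊔ (1+b) := (max_add_add_left 1 a b).symm
lemma one_add_ite (c : Prop) [Decidable c] (v : Trop) :
    (1:Trop) + (if c then v else ⊥) = if c then 1+v else ⊥ := by split <;> simp
lemma ite_and_bot (c d : Prop) [Decidable c] [Decidable d] (v : Trop) :
    (if c then (if d then v else ⊥) else ⊥) = if c ∧ d then v else ⊥ := by
  by_cases h : c <;> by_cases h' : d <;> simp [h, h']
lemma ite_sup_bot (c : Prop) [Decidable c] (a b : Trop) :
    (if c then a ⊔ b else ⊥) = (if c then a else ⊥) ⊔ (if c then b else ⊥) := by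
  split <;> simp
end distrib

noncomputable def E3 {n : ℕ} (u v w : Fin (n+1)) : Matrix (Fin (n+1)) (Fin (n+1)) Trop := fun i j =>
  (if i = j then (0:Trop) else ⊥) ⊔ (if i ≤ u ∧ u < j then 1 else ⊥)
  ⊔ (if i ≤ v ∧ v < j then 1 else ⊥) ⊔ (if i ≤ w ∧ w < j then 1 else ⊥)
  ⊔ (if i ≤ u ∧ u < v ∧ v < j then 2 else ⊥) ⊔ (if i ≤ u ∧ u < w ∧ w < j then 2 else ⊥)
  ⊔ (if i ≤ v ∧ v < w ∧ w < j then 2 else ⊥)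
  ⊔ (if i ≤ u ∧ u < v ∧ v < w ∧ w < j then 3 else ⊥)

lemma triple_eq {n : ℕ} (x y z : Fin n) :
    tmul (letterMat x) (tmul (letterMat y) (letterMat z)) = E3 (bar x) (bar y) (bar z) := by
  funext i j
  rw [tmul_letter_left, tmul_letter_left, colsup_tmul_letter, colsup_letterMat,
      colsup_letterMat, letterMat_eq]
  simp only [one_add_sup, one_add_ite, ite_and_bot, ite_sup_bot, add_zero]
  norm_num
  simp only [E3]
  ac_rfl

lemma ite_le_ite_bot {p q : Prop} [Decidable p] [Decidable q] (h : p → q) (v : Trop) :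
    (if p then v else ⊥) ≤ (if q then v else ⊥) := by
  by_cases hp : p
  · simp [hp, h hp]
  · simp [hp]

lemma E3_knuth₁ {n : ℕ} (a c b : Fin (n+1)) (hcb : c < b) (hba : b ≤ a) :
    E3 a c b = E3 c a b := by
  have hca : c < a := lt_of_lt_of_le hcb hba
  have hnac : ¬ a < c := not_lt.2 (le_of_lt hca)
  have hnab : ¬ a < b := not_lt.2 hba
  funext i j
  simp only [E3]
  simp [hnac, hnab, hcb, hca]
  have habs : (if i ≤ c ∧ a < j then (2:Trop) else ⊥) ≤ (if i ≤ c ∧ b < j then (2:Trop) else ⊥) :=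
    ite_le_ite_bot (fun h => ⟨h.1, lt_of_le_of_lt hba h.2⟩) 2
  conv_rhs => rw [sup_assoc, sup_eq_right.mpr habs]
  ac_rfl

lemma E3_knuth₂ {n : ℕ} (b a c : Fin (n+1)) (hcb : c ≤ b) (hba : b < a) :
    E3 b a c = E3 b c a := by
  have hca : c < a := lt_of_le_of_lt hcb hba
  have hnbc : ¬ b < c := not_lt.2 hcb
  have hnac : ¬ a < c := not_lt.2 (le_of_lt hca)
  funext i j
  simp only [E3]
  simp [hnbc, hnac, hba, hca]
  have habs : (if i ≤ c ∧ a < j then (2:Trop) else ⊥) ≤ (if i ≤ b ∧ a < j then (2:Trop) else ⊥) :=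
    ite_le_ite_bot (fun h => ⟨le_trans h.1 hcb, h.2⟩) 2
  conv_rhs => rw [sup_assoc, sup_eq_left.mpr habs]
  ac_rfl

lemma tmul_letter_idem {n : ℕ} (a : Fin n) : tmul (letterMat a) (letterMat a) = letterMat a := by
  funext i j
  rw [tmul_letter_left, colsup_letterMat]
  rw [letterMat_eq]
  simp only [lt_irrefl, false_and, if_false, one_add_ite, ite_and_bot, ite_sup_bot, one_add_sup,
    sup_bot_eq, add_zero]
  rw [sup_assoc, sup_idem]

lemma bar_lt_bar {n : ℕ} {x y : Fin n} (h : x < y) : bar y < bar x := by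
  have hx := x.isLt
  have hy := y.isLt
  rw [Fin.lt_def] at h ⊢
  simp only [bar]
  omega

lemma bar_le_bar {n : ℕ} {x y : Fin n} (h : x ≤ y) : bar y ≤ bar x := by
  have hx := x.isLt
  have hy := y.isLt
  rw [Fin.le_def] at h ⊢
  simp only [bar]
  omega

lemma rhoList_append {n : ℕ} (u v : List (Fin n)) :
    rhoList (u ++ v) = tmul (rhoList u) (rhoList v) := by
  induction u with
  | nil => simp [rhoList, tmul_id_left]
  | cons x xs ih =>
    show tmul (letterMat x) (rhoList (xs ++ v)) = tmul (tmul (letterMat x) (rhoList xs)) (rhoList v)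
    rw [ih, tmul_assoc]

lemma rhoList_rel {n : ℕ} (u v : FreeMonoid (Fin n)) (h : StylRel n u v) :
    rhoList (FreeMonoid.toList u) = rhoList (FreeMonoid.toList v) := by
  induction h with
  | knuth₁ a b c hab hbc =>
    show rhoList [a, c, b] = rhoList [c, a, b]
    simp only [rhoList, tmul_id_right]
    rw [show tmul (letterMat a) (tmul (letterMat c) (letterMat b)) = E3 (bar a) (bar c) (bar b)
        from triple_eq a c b,
      show tmul (letterMat c) (tmul (letterMat a) (letterMat b)) = E3 (bar c) (bar a) (bar b)
        from triple_eq c a b]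
    exact E3_knuth₁ (bar a) (bar c) (bar b) (bar_lt_bar hbc) (bar_le_bar hab)
  | knuth₂ a b c hab hbc =>
    show rhoList [b, a, c] = rhoList [b, c, a]
    simp only [rhoList, tmul_id_right]
    rw [show tmul (letterMat b) (tmul (letterMat a) (letterMat c)) = E3 (bar b) (bar a) (bar c)
        from triple_eq b a c,
      show tmul (letterMat b) (tmul (letterMat c) (letterMat a)) = E3 (bar b) (bar c) (bar a)
        from triple_eq b c a]
    exact E3_knuth₂ (bar b) (bar a) (bar c) (bar_le_bar hbc) (bar_lt_bar hab)
  | idem a =>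
    show rhoList [a, a] = rhoList [a]
    simp only [rhoList, tmul_id_right]
    exact tmul_letter_idem a

/-- The congruence of having equal ρ-images. -/
def rhoCon (n : ℕ) : Con (FreeMonoid (Fin n)) where
  r u v := rhoList (FreeMonoid.toList u) = rhoList (FreeMonoid.toList v)
  iseqv := ⟨fun _ => rfl, Eq.symm, Eq.trans⟩
  mul' := by
    intro a b c d h1 h2
    show rhoList (FreeMonoid.toList (a * c)) = rhoList (FreeMonoid.toList (b * d))
    rw [FreeMonoid.toList_mul, FreeMonoid.toList_mul, rhoList_append, rhoList_append, h1, h2]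

lemma rho_respects (n : ℕ) : ∀ u v : FreeMonoid (Fin n), stylCon n u v →
    rhoList (FreeMonoid.toList u) = rhoList (FreeMonoid.toList v) := by
  intro u v h
  exact (Con.conGen_le.mpr (fun x y hr => rhoList_rel x y hr) : stylCon n ≤ rhoCon n) h

/-- `ρ_n` respects the stylic congruence, hence induces a well-defined
monoid homomorphism from `styl_n` to `U_{n+1}(𝕋)` (a map on the quotient sending the
identity to the tropical identity matrix and products to tropical matrix products). -/
theorem rho_induces_hom (n : ℕ) (hn : 1 ≤ n) :
    (∀ u v : FreeMonoid (Fin n), stylCon n u v →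
      rhoList (FreeMonoid.toList u) = rhoList (FreeMonoid.toList v)) ∧
    ∃ f : Styl n → Matrix (Fin (n + 1)) (Fin (n + 1)) Trop,
      (∀ w : FreeMonoid (Fin n), f ((stylCon n).mk' w) = rhoList (FreeMonoid.toList w)) ∧
      f 1 = tropId (n + 1) ∧
      ∀ x y : Styl n, f (x * y) = tmul (f x) (f y) := by
  refine ⟨rho_respects n, ?_⟩
  refine ⟨fun q => Con.liftOn q (fun w => rhoList (FreeMonoid.toList w)) (rho_respects n), ?_, ?_, ?_⟩
  · intro w; rfl
  · rfl
  · intro x y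
    induction x using Con.induction_on with
    | H u =>
      induction y using Con.induction_on with
      | H v =>
        show Con.liftOn ((u : Styl n) * (v : Styl n)) _ _ = _
        rw [← Con.coe_mul]
        show rhoList (FreeMonoid.toList (u * v)) = _
        rw [FreeMonoid.toList_mul, rhoList_append]
        rfl
end

section
/- Let n ≥ 1, let w be a word over 𝒜_n, let a ∈ 𝒜_n and write ā = n+1−a, and let k ∈ ℕ with k ≥ 1. Then a ∈ supp(δ^{k−1}(w)) (i.e. a occurs in the k-th row of the N-tableau N(w)) if and only if there exists an index j with ā < j ≤ n+1 such that ρ_n(w)_{ā,j} = k and ρ_n(w)_{ā+1,j} = k−1. -/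
namespace StyAux

open List

variable {n : ℕ}

theorem up_some_mem {B : Finset (Fin n)} {a c : Fin n} (h : up B a = some c) :
    c ∈ B ∧ a < c := by
  unfold up at h
  split at h
  · rename_i hne
    have hm := Finset.min'_mem _ hne
    rw [Finset.mem_filter] at hm
    injection h with h'
    subst h'
    exact hm
  · exact absurd h (by simp)

theorem up_some_min {B : Finset (Fin n)} {a c d : Fin n} (h : up B a = some c)
    (hd : d ∈ B) (had : a < d) : c ≤ d := by
  unfold up at h
  split at h
  · injection h with h'
    subst h'
    exact Finset.min'_le _ _ (Finset.mem_filter.2 ⟨hd, had⟩)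
  · exact absurd h (by simp)

theorem up_exists {B : Finset (Fin n)} {a d : Fin n} (hd : d ∈ B) (had : a < d) :
    ∃ c, up B a = some c := by
  unfold up
  rw [dif_pos ⟨d, Finset.mem_filter.2 ⟨hd, had⟩⟩]
  exact ⟨_, rfl⟩

theorem mem_delta {v : List (Fin n)} {z : Fin n} :
    z ∈ delta v ↔ ∃ i, ∃ h : i < v.length, up (v.take i).toFinset v[i] = some z := by
  unfold delta
  rw [List.mem_filterMap]
  constructor
  · rintro ⟨i, hi, hz⟩
    rw [List.mem_range] at hi
    rw [List.getElem?_eq_getElem hi] at hz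
    simp only [Option.bind_some] at hz
    exact ⟨i, hi, hz⟩
  · rintro ⟨i, hi, hz⟩
    refine ⟨i, List.mem_range.2 hi, ?_⟩
    rw [List.getElem?_eq_getElem hi]
    simpa using hz

theorem delta_nil : delta ([] : List (Fin n)) = [] := by simp [delta]

theorem delta_append_singleton (u : List (Fin n)) (c : Fin n) :
    delta (u ++ [c]) = delta u ++ (up u.toFinset c).toList := by
  unfold delta
  have hlen : (u ++ [c]).length = u.length + 1 := by simp
  rw [hlen, List.range_succ, List.filterMap_append]
  congr 1
  · apply List.filterMap_congr
    intro i hi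
    rw [List.mem_range] at hi
    rw [List.getElem?_append_left hi, List.take_append_of_le_length (le_of_lt hi)]
  · have h1 : (u ++ [c])[u.length]? = some c := by simp
    simp only [List.filterMap_cons, List.filterMap_nil, h1, Option.bind_some]
    have h2 : (u ++ [c]).take u.length = u := by simp
    rw [h2]
    cases h : up u.toFinset c <;> simp [h]

def Rw (w : List (Fin n)) (k : ℕ) : Finset (Fin n) := (delta^[k] w).toFinset

def ins (w : List (Fin n)) (x : Fin n) : ℕ → Option (Fin n)
  | 0 => some x
  | k+1 => (ins w x k).bind (up (Rw w k))

theorem iterate_delta_append (w : List (Fin n)) (x : Fin n) :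
    ∀ k, delta^[k] (w ++ [x]) = delta^[k] w ++ (ins w x k).toList := by
  intro k
  induction k with
  | zero => simp [ins]
  | succ k ih =>
    rw [Function.iterate_succ_apply', Function.iterate_succ_apply', ih]
    cases h : ins w x k with
    | none => simp [ins, h]
    | some c =>
      simp only [Option.toList_some]
      rw [delta_append_singleton]
      simp [ins, h, Rw]

theorem mem_Rw_append {w : List (Fin n)} {x : Fin n} {k : ℕ} {a : Fin n} :
    a ∈ Rw (w ++ [x]) k ↔ a ∈ Rw w k ∨ ins w x k = some a := by
  rw [Rw, iterate_delta_append, List.toFinset_append, Finset.mem_union]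
  cases h : ins w x k with
  | none => simp [Rw]
  | some c => simp [Rw, eq_comm]

theorem delta_subset (v : List (Fin n)) : (delta v).toFinset ⊆ v.toFinset := by
  intro z hz
  rw [List.mem_toFinset, mem_delta] at hz
  obtain ⟨i, hi, hz⟩ := hz
  have h1 := (up_some_mem hz).1
  rw [List.mem_toFinset] at h1 ⊢
  exact List.take_subset i v h1

theorem Rw_succ_subset (w : List (Fin n)) (k : ℕ) : Rw w (k+1) ⊆ Rw w k := by
  rw [Rw, Function.iterate_succ_apply']
  exact delta_subset _

theorem Rw_subset_of_le {w : List (Fin n)} {k l : ℕ} (h : k ≤ l) : Rw w l ⊆ Rw w k := by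
  obtain ⟨d, rfl⟩ : ∃ d, l = k + d := ⟨l - k, by omega⟩
  clear h
  induction d with
  | zero => exact subset_rfl
  | succ d ih => exact (Rw_succ_subset w (k+d)).trans ih

theorem downstep {w : List (Fin n)} {k : ℕ} {z : Fin n} (h : z ∈ Rw w (k+1)) :
    ∃ d ∈ Rw w k, d < z := by
  rw [Rw, Function.iterate_succ_apply', List.mem_toFinset, mem_delta] at h
  obtain ⟨i, hi, hz⟩ := h
  exact ⟨(delta^[k] w)[i], List.mem_toFinset.2 (List.getElem_mem hi), (up_some_mem hz).2⟩

theorem ins_succ {w : List (Fin n)} {x : Fin n} {k : ℕ} {c : Fin n}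
    (h : ins w x (k+1) = some c) :
    c ∈ Rw w k ∧ ∃ c', ins w x k = some c' ∧ c' < c ∧ ∀ d ∈ Rw w k, c' < d → c ≤ d := by
  rw [ins] at h
  cases h' : ins w x k with
  | none => rw [h'] at h; simp at h
  | some c' =>
    rw [h'] at h
    simp only [Option.bind_some] at h
    exact ⟨(up_some_mem h).1, c', rfl, (up_some_mem h).2,
      fun d hd hlt => up_some_min h hd hlt⟩

theorem ins_ge {w : List (Fin n)} {x : Fin n} :
    ∀ {k : ℕ} {c : Fin n}, ins w x k = some c → x ≤ c := by
  intro k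
  induction k with
  | zero =>
    intro c h
    rw [ins] at h
    injection h with h'
    exact le_of_eq h'
  | succ k ih =>
    intro c h
    obtain ⟨-, c', hc', hlt, -⟩ := ins_succ h
    exact (ih hc').trans hlt.le

theorem ins_exists_of_le {w : List (Fin n)} {x : Fin n} :
    ∀ {j i : ℕ} {c : Fin n}, i ≤ j → ins w x j = some c →
      ∃ c', ins w x i = some c' ∧ c' ≤ c := by
  intro j
  induction j with
  | zero =>
    intro i c hij h
    have : i = 0 := by omega
    subst this
    exact ⟨c, h, le_rfl⟩
  | succ j ih =>
    intro i c hij h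
    rcases Nat.eq_or_lt_of_le hij with rfl | hlt
    · exact ⟨c, h, le_rfl⟩
    · obtain ⟨-, c', hc', hlt', -⟩ := ins_succ h
      obtain ⟨c'', h1, h2⟩ := ih (show i ≤ j by omega) hc'
      exact ⟨c'', h1, h2.trans hlt'.le⟩

def Dlen : List (Fin n) → ℕ → ℕ → ℕ
  | [], _, _ => 0
  | x :: xs, b, u =>
    if b ≤ x.val ∧ x.val < u then max (Dlen xs b u) (Dlen xs b x.val + 1) else Dlen xs b u

theorem Dlen_nil (b u : ℕ) : Dlen ([] : List (Fin n)) b u = 0 := rfl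

theorem Dlen_cons (x : Fin n) (xs : List (Fin n)) (b u : ℕ) :
    Dlen (x :: xs) b u =
      if b ≤ x.val ∧ x.val < u then max (Dlen xs b u) (Dlen xs b x.val + 1) else Dlen xs b u :=
  rfl

theorem Dlen_eq_zero {w : List (Fin n)} {b u : ℕ} (h : u ≤ b) : Dlen w b u = 0 := by
  induction w with
  | nil => rfl
  | cons x xs ih => rw [Dlen_cons, if_neg (by omega)]; exact ih

theorem Dlen_mono_left {w : List (Fin n)} {b b' : ℕ} (u : ℕ) (h : b' ≤ b) :
    Dlen w b u ≤ Dlen w b' u := by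
  induction w generalizing u with
  | nil => exact le_rfl
  | cons x xs ih =>
    have h1 := ih u
    have h2 := ih x.val
    rw [Dlen_cons, Dlen_cons]
    split_ifs <;> omega

theorem Dlen_mono_right {w : List (Fin n)} {b u u' : ℕ} (h : u ≤ u') :
    Dlen w b u ≤ Dlen w b u' := by
  induction w with
  | nil => exact le_rfl
  | cons x xs ih =>
    rw [Dlen_cons, Dlen_cons]
    split_ifs <;> omega

theorem Dlen_append (w : List (Fin n)) (x : Fin n) (b u : ℕ) :
    Dlen (w ++ [x]) b u =
      if b ≤ x.val ∧ x.val < u then max (Dlen w b u) (Dlen w (x.val+1) u + 1)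
      else Dlen w b u := by
  induction w generalizing b u with
  | nil => simp [Dlen_cons, Dlen_nil]
  | cons y ys ih =>
    simp only [List.cons_append, Dlen_cons, ih]
    split_ifs <;> omega

theorem Dlen_le_append (w : List (Fin n)) (x : Fin n) (b u : ℕ) :
    Dlen w b u ≤ Dlen (w ++ [x]) b u := by
  rw [Dlen_append]
  split_ifs <;> omega

def Chn (w : List (Fin n)) (b u k : ℕ) : Prop :=
  ∃ m : ℕ → Fin n,
    (∀ i, i < k → m i ∈ Rw w i ∧ b ≤ (m i).val ∧ (m i).val < u) ∧
    (∀ i, i + 1 < k → m i < m (i+1))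

theorem chain_mono {m : ℕ → Fin n} {k : ℕ} (hm : ∀ i, i + 1 < k → m i < m (i+1)) :
    ∀ {i j}, i < j → j < k → m i < m j := by
  intro i j hij hjk
  induction j with
  | zero => omega
  | succ j ih =>
    rcases Nat.eq_or_lt_of_le (Nat.le_of_lt_succ hij) with rfl | h
    · exact hm i hjk
    · exact (ih h (by omega)).trans (hm j hjk)

theorem Chn_of_le {w : List (Fin n)} {b u k k' : ℕ} (h : k' ≤ k) (hc : Chn w b u k) :
    Chn w b u k' := by
  obtain ⟨m, h1, h2⟩ := hc
  exact ⟨m, fun i hi => h1 i (by omega), fun i hi => h2 i (by omega)⟩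

theorem Chn_zero (hn : 0 < n) (w : List (Fin n)) (b u : ℕ) : Chn w b u 0 :=
  ⟨fun _ => ⟨0, hn⟩, fun i hi => by omega, fun i hi => by omega⟩

theorem Chn_append {w : List (Fin n)} {x : Fin n} {b u k : ℕ} (h : Chn w b u k) :
    Chn (w ++ [x]) b u k := by
  obtain ⟨m, h1, h2⟩ := h
  exact ⟨m, fun i hi => ⟨mem_Rw_append.2 (Or.inl (h1 i hi).1), (h1 i hi).2⟩, h2⟩

theorem MI (hn : 0 < n) :
    ∀ (w : List (Fin n)) (b u k : ℕ), Chn w b u k ↔ k ≤ Dlen w b u := by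
  intro w
  induction w using List.reverseRecOn with
  | nil =>
    intro b u k
    rw [Dlen_nil]
    constructor
    · rintro ⟨m, h1, -⟩
      by_contra hk
      have hk0 : 0 < k := by omega
      have hmem := (h1 0 hk0).1
      rw [Rw, Function.iterate_fixed delta_nil] at hmem
      simp at hmem
    · intro hk
      have : k = 0 := by omega
      subst this
      exact Chn_zero hn _ _ _
  | append_singleton w x ih =>
    intro b u k
    constructor
    · -- alpha direction
      rintro ⟨m, h1, h2⟩
      rcases Nat.eq_zero_or_pos k with rfl | hk0
      · omega
      by_cases hall : ∀ i, i < k → m i ∈ Rw w i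
      · have hck : k ≤ Dlen w b u :=
          (ih b u k).1 ⟨m, fun i hi => ⟨hall i hi, (h1 i hi).2⟩, h2⟩
        exact hck.trans (Dlen_le_append w x b u)
      · push_neg at hall
        classical
        have hex : ∃ i, i < k ∧ m i ∉ Rw w i := by
          obtain ⟨i, hi1, hi2⟩ := hall; exact ⟨i, hi1, hi2⟩
        set j₀ := Nat.find hex with hj₀def
        obtain ⟨hj₀k, hj₀bad⟩ := Nat.find_spec hex
        have hmin : ∀ i, i < j₀ → m i ∈ Rw w i := by
          intro i hi
          by_contra hbad
          have : Nat.find hex ≤ i := Nat.find_le ⟨by omega, hbad⟩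
          omega
        have hins0 : ins w x j₀ = some (m j₀) := by
          rcases mem_Rw_append.1 (h1 j₀ hj₀k).1 with h | h
          · exact absurd h hj₀bad
          · exact h
        have hdown : ∀ d, d ≤ j₀ → ∃ c, ins w x (j₀ - d) = some c ∧ m (j₀ - d) ≤ c := by
          intro d
          induction d with
          | zero => intro _; exact ⟨m j₀, by simpa using hins0, le_rfl⟩
          | succ d ihd =>
            intro hd
            obtain ⟨c, hc, hmc⟩ := ihd (by omega)
            have hidx : j₀ - d = (j₀ - (d+1)) + 1 := by omega
            rw [hidx] at hc hmc
            obtain ⟨-, c', hc', hlt', hminimal⟩ := ins_succ hc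
            refine ⟨c', hc', ?_⟩
            by_contra hgt
            push_neg at hgt
            have hmi : m (j₀ - (d+1)) ∈ Rw w (j₀ - (d+1)) := hmin _ (by omega)
            have h3 := hminimal _ hmi hgt
            have h4 : m (j₀ - (d+1)) < m (j₀ - (d+1) + 1) := h2 _ (by omega)
            exact absurd (h3.trans_lt (h4.trans_le hmc)) (lt_irrefl c)
        have hm0x : m 0 ≤ x := by
          obtain ⟨c, hc, hmc⟩ := hdown j₀ le_rfl
          rw [Nat.sub_self] at hc hmc
          rw [ins] at hc
          injection hc with hc'
          subst hc'
          exact hmc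
        have hxb : b ≤ x.val := le_trans (h1 0 hk0).2.1 hm0x
        have hxu : x.val < u := lt_of_le_of_lt (ins_ge hins0) (h1 j₀ hj₀k).2.2
        have hinsS : ∀ s, s ≤ j₀ → ∃ c, ins w x s = some c ∧ c ≤ m j₀ := by
          intro s hs
          obtain ⟨c, hc, hcle⟩ := ins_exists_of_le hs hins0
          exact ⟨c, hc, hcle⟩
        have hchain : Chn w (x.val + 1) u (k - 1) := by
          refine ⟨fun i => if i + 1 ≤ j₀ then (ins w x (i+1)).getD x else m (i+1), ?_, ?_⟩
          · intro i hi
            dsimp only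
            by_cases hij : i + 1 ≤ j₀
            · obtain ⟨c, hc, hcle⟩ := hinsS (i+1) hij
              rw [if_pos hij, hc, Option.getD_some]
              obtain ⟨hcmem, c', hc', hlt', -⟩ := ins_succ hc
              refine ⟨hcmem, ?_, ?_⟩
              · have hxc : x.val < c.val := (ins_ge hc').trans_lt hlt'
                omega
              · exact lt_of_le_of_lt (show c.val ≤ (m j₀).val from hcle) (h1 j₀ hj₀k).2.2
            · push_neg at hij
              rw [if_neg (by omega)]
              have hi1k : i + 1 < k := by omega
              refine ⟨?_, ?_, (h1 (i+1) hi1k).2.2⟩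
              · rcases mem_Rw_append.1 (h1 (i+1) hi1k).1 with h | h
                · exact Rw_succ_subset w i h
                · exact (ins_succ h).1
              · have hjlt : m j₀ < m (i+1) := chain_mono h2 (by omega) hi1k
                have hxj : x ≤ m j₀ := ins_ge hins0
                have hlt3 : x.val < (m (i+1)).val := hxj.trans_lt hjlt
                omega
          · intro i hi
            dsimp only
            by_cases hij2 : i + 2 ≤ j₀
            · obtain ⟨c, hc, -⟩ := hinsS (i+1) (by omega)
              obtain ⟨c', hc', -⟩ := hinsS (i+2) (by omega)
              rw [if_pos (by omega : i + 1 ≤ j₀), if_pos (by omega : i + 1 + 1 ≤ j₀), hc]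
              have : i + 1 + 1 = i + 2 := rfl
              rw [this, hc', Option.getD_some, Option.getD_some]
              obtain ⟨-, c'', hc'', hlt'', -⟩ := ins_succ (by rw [← this] at hc'; exact hc')
              rw [hc] at hc''
              injection hc'' with hcc
              subst hcc
              exact hlt''
            · by_cases hij1 : i + 1 ≤ j₀
              · have hj0 : j₀ = i + 1 := by omega
                obtain ⟨c, hc, -⟩ := hinsS (i+1) hij1
                rw [if_pos hij1, if_neg (by omega), hc, Option.getD_some]
                rw [hj0] at hins0
                rw [hins0] at hc
                injection hc with hcc
                subst hcc
                have : i + 1 + 1 = i + 2 := rfl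
                rw [this]
                rw [← hj0]
                exact chain_mono h2 (by omega) (by omega)
              · rw [if_neg hij1, if_neg (by omega)]
                exact h2 (i+1) (by omega)
        have hfin : k - 1 ≤ Dlen w (x.val + 1) u := (ih (x.val+1) u (k-1)).1 hchain
        rw [Dlen_append, if_pos ⟨hxb, hxu⟩]
        omega
    · -- beta direction
      intro hk
      refine Chn_of_le hk ?_
      rw [Dlen_append]
      by_cases hcond : b ≤ x.val ∧ x.val < u
      · rw [if_pos hcond]
        rcases le_or_gt (Dlen w (x.val+1) u + 1) (Dlen w b u) with hle | hlt
        · rw [max_eq_left hle]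
          exact Chn_append ((ih b u _).2 le_rfl)
        · rw [max_eq_right hlt.le]
          set t := Dlen w (x.val + 1) u with ht
          obtain ⟨m, h1, h2⟩ := (ih (x.val+1) u t).2 le_rfl
          have traj : ∀ i, i ≤ t →
              ∃ c, ins w x i = some c ∧ x ≤ c ∧ c.val < u ∧ (∀ j, i = j + 1 → c ≤ m j) := by
            intro i
            induction i with
            | zero =>
              intro _
              exact ⟨x, rfl, le_rfl, hcond.2, fun j hj => absurd hj (by omega)⟩
            | succ i ihi =>
              intro hit
              obtain ⟨c, hc, hxc, hcu, hcm⟩ := ihi (by omega)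
              have hlt2 : c < m i := by
                rcases Nat.eq_zero_or_pos i with rfl | hi0
                · rw [ins] at hc
                  injection hc with hc'
                  subst hc'
                  have hb1 := (h1 0 (by omega)).2.1
                  rw [Fin.lt_def]
                  omega
                · obtain ⟨j, rfl⟩ : ∃ j, i = j + 1 := ⟨i - 1, by omega⟩
                  have ha := hcm j rfl
                  have hb := h2 j (by omega)
                  exact ha.trans_lt hb
              have hmem : m i ∈ Rw w i := (h1 i (by omega)).1
              obtain ⟨c', hc'⟩ := up_exists hmem hlt2
              have hc'le : c' ≤ m i := up_some_min hc' hmem hlt2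
              refine ⟨c', ?_, ?_, ?_, ?_⟩
              · rw [ins, hc, Option.bind_some]
                exact hc'
              · exact hxc.trans (le_of_lt (up_some_mem hc').2)
              · have h5 := (h1 i (by omega)).2.2
                have h6 : c'.val ≤ (m i).val := hc'le
                omega
              · intro j hj
                have hji : j = i := by omega
                subst hji
                exact hc'le
          refine ⟨fun i => (ins w x i).getD x, ?_, ?_⟩
          · intro i hi
            dsimp only
            obtain ⟨c, hc, hxc, hcu, -⟩ := traj i (by omega)
            rw [hc, Option.getD_some]
            refine ⟨mem_Rw_append.2 (Or.inr hc), ?_, hcu⟩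
            have hxc' : x.val ≤ c.val := hxc
            omega
          · intro i hi
            dsimp only
            obtain ⟨c, hc, -, -, -⟩ := traj i (by omega)
            obtain ⟨c', hc', -, -, -⟩ := traj (i+1) (by omega)
            rw [hc, hc', Option.getD_some, Option.getD_some]
            obtain ⟨-, c'', hc'', hlt'', -⟩ := ins_succ hc'
            rw [hc] at hc''
            injection hc'' with hcc
            subst hcc
            exact hlt''
      · rw [if_neg hcond]
        exact Chn_append ((ih b u _).2 le_rfl)

theorem chain_to (hn : 0 < n) {w : List (Fin n)} :
    ∀ {K : ℕ} {a : Fin n}, a ∈ Rw w K → Chn w 0 (a.val + 1) (K + 1) := by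
  intro K
  induction K with
  | zero =>
    intro a ha
    refine ⟨fun _ => a, ?_, ?_⟩
    · intro i hi
      dsimp only
      have h0 : i = 0 := by omega
      subst h0
      exact ⟨ha, by omega, by omega⟩
    · intro i hi
      omega
  | succ K ih =>
    intro a ha
    obtain ⟨d, hd, hda⟩ := downstep ha
    obtain ⟨m, h1, h2⟩ := ih hd
    refine ⟨fun i => if i ≤ K then m i else a, ?_, ?_⟩
    · intro i hi
      dsimp only
      by_cases hiK : i ≤ K
      · rw [if_pos hiK]
        have h3 := h1 i (by omega)
        refine ⟨h3.1, h3.2.1, ?_⟩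
        have hdval : d.val < a.val := hda
        omega
      · rw [if_neg hiK]
        have : i = K + 1 := by omega
        subst this
        exact ⟨ha, by omega, by omega⟩
    · intro i hi
      dsimp only
      by_cases hiK : i + 1 ≤ K
      · rw [if_pos (by omega), if_pos hiK]
        exact h2 i (by omega)
      · by_cases hiK2 : i ≤ K
        · rw [if_pos hiK2, if_neg (by omega)]
          have h3 := (h1 i (by omega)).2.2
          have hdval : d.val < a.val := hda
          rw [Fin.lt_def]
          omega
        · omega

theorem comb (hn : 0 < n) (w : List (Fin n)) (a : Fin n) (K : ℕ) :
    a ∈ Rw w K ↔ ∃ b, Dlen w b (a.val + 1) = K + 1 ∧ Dlen w b a.val = K := by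
  constructor
  · intro ha
    classical
    set P : ℕ → Prop := fun b => Chn w b (a.val + 1) (K + 1) with hP
    have hP0 : P 0 := chain_to hn ha
    set B := Nat.findGreatest P a.val with hB
    have hPB : P B := Nat.findGreatest_spec (Nat.zero_le _) hP0
    have hmax : ∀ b', B < b' → b' ≤ a.val → ¬ P b' := fun b' hb1 hb2 =>
      Nat.findGreatest_is_greatest hb1 hb2
    have f1 : K + 1 ≤ Dlen w B (a.val+1) := (MI hn w _ _ _).1 hPB
    have f2 : Dlen w B (a.val+1) ≤ K + 1 := by
      by_contra hgt
      push_neg at hgt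
      obtain ⟨q, hq1, hq2⟩ := (MI hn w B (a.val+1) (K+2)).2 (by omega)
      have hPq : P ((q 1).val) := by
        refine ⟨fun i => q (i+1), ?_, ?_⟩
        · intro i hi
          have h3 := hq1 (i+1) (by omega)
          refine ⟨Rw_succ_subset w i h3.1, ?_, h3.2.2⟩
          rcases Nat.eq_zero_or_pos i with rfl | hi0
          · exact le_rfl
          · have h4 : q 1 < q (i+1) := chain_mono hq2 (by omega) (by omega)
            exact h4.le
        · intro i hi
          exact hq2 (i+1) (by omega)
      have hq1a : (q 1).val ≤ a.val := by
        have := (hq1 1 (by omega)).2.2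
        omega
      have hBq : B < (q 1).val := by
        have h0 := (hq1 0 (by omega)).2.1
        have h5 : (q 0).val < (q 1).val := hq2 0 (by omega)
        omega
      exact hmax _ hBq hq1a hPq
    have f3 : K ≤ Dlen w B a.val := by
      obtain ⟨m, h1, h2⟩ := hPB
      refine (MI hn w B a.val K).1 ⟨m, ?_, fun i hi => h2 i (by omega)⟩
      intro i hi
      have h3 := h1 i (by omega)
      refine ⟨h3.1, h3.2.1, ?_⟩
      have h4 : (m K).val < a.val + 1 := (h1 K (by omega)).2.2
      have h5 : (m i).val < (m K).val := chain_mono h2 (by omega) (by omega)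
      omega
    have f4 : Dlen w B a.val ≤ K := by
      by_contra hgt
      push_neg at hgt
      obtain ⟨r, hr1, hr2⟩ := (MI hn w B a.val (K+1)).2 (by omega)
      have hPr : P ((r 0).val + 1) := by
        refine ⟨fun i => if i < K then r (i+1) else a, ?_, ?_⟩
        · intro i hi
          dsimp only
          by_cases hiK : i < K
          · rw [if_pos hiK]
            have h3 := hr1 (i+1) (by omega)
            refine ⟨Rw_succ_subset w i h3.1, ?_, by omega⟩
            have h4 : (r 0).val < (r (i+1)).val := chain_mono hr2 (by omega) (by omega)
            omega
          · rw [if_neg hiK]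
            have : i = K := by omega
            subst this
            refine ⟨ha, ?_, by omega⟩
            have h5 := (hr1 0 (by omega)).2.2
            omega
        · intro i hi
          dsimp only
          by_cases h6 : i + 1 < K
          · rw [if_pos (by omega), if_pos h6]
            exact hr2 (i+1) (by omega)
          · by_cases h7 : i < K
            · rw [if_pos h7, if_neg (by omega)]
              have h8 := (hr1 (i+1) (by omega)).2.2
              rw [Fin.lt_def]
              omega
            · omega
      have h9 := (hr1 0 (by omega)).2
      exact hmax _ (by omega) (by omega) hPr
    exact ⟨B, by omega, by omega⟩
  · rintro ⟨b, h1, h2⟩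
    obtain ⟨m, hm1, hm2⟩ := (MI hn w b (a.val+1) (K+1)).2 (by omega)
    have hma : m K = a := by
      have h3 := (hm1 K (by omega)).2.2
      by_contra hne
      have hvne : (m K).val ≠ a.val := fun h => hne (Fin.ext h)
      have h4 : (m K).val < a.val := by omega
      have h10 : K + 1 ≤ Dlen w b a.val := by
        refine (MI hn w b a.val (K+1)).1 ⟨m, ?_, hm2⟩
        intro i hi
        have h5 := hm1 i hi
        refine ⟨h5.1, h5.2.1, ?_⟩
        rcases Nat.eq_or_lt_of_le (Nat.le_of_lt_succ hi) with rfl | h6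
        · exact h4
        · have h7 : (m i).val < (m K).val := chain_mono hm2 h6 (by omega)
          omega
      omega
    rw [← hma]
    exact (hm1 K (by omega)).1

noncomputable def tNat (q : ℕ) : Trop := if q = 0 then ⊥ else ((q : ℝ) : Trop)

theorem tNat_zero : tNat 0 = (⊥ : Trop) := rfl

theorem tNat_of_pos {q : ℕ} (h : 0 < q) : tNat q = ((q : ℝ) : Trop) := if_neg (by omega)

theorem tNat_mono {q q' : ℕ} (h : q ≤ q') : tNat q ≤ tNat q' := by
  unfold tNat
  split_ifs with h1 h2
  · exact le_rfl
  · exact bot_le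
  · omega
  · exact WithBot.coe_le_coe.2 (by exact_mod_cast h)

theorem Dlen_le_cons (x : Fin n) (xs : List (Fin n)) (b u : ℕ) :
    Dlen xs b u ≤ Dlen (x :: xs) b u := by
  rw [Dlen_cons]
  split_ifs <;> omega

theorem rho_eq (w : List (Fin n)) : ∀ (i j : Fin (n+1)),
    rhoList w i j =
      if i = j then (0 : Trop)
      else if i.val < j.val then tNat (Dlen w (n - j.val) (n - i.val)) else ⊥ := by
  induction w with
  | nil =>
    intro i j
    show tropId (n+1) i j = _
    simp only [tropId, Dlen_nil, tNat_zero]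
    split_ifs <;> rfl
  | cons x xs ih =>
    intro i j
    have hxn : x.val < n := x.isLt
    have hbar : (bar x).val = n - 1 - x.val := rfl
    show Finset.univ.sup (fun t => letterMat x i t + rhoList xs t j) = _
    apply _root_.le_antisymm
    · apply Finset.sup_le
      intro t _
      simp only [letterMat]
      rcases eq_or_ne i t with rfl | hit
      · rw [if_pos rfl, zero_add, ih i j]
        split_ifs with h1 h2
        · exact le_rfl
        · exact tNat_mono (Dlen_le_cons x xs _ _)
        · exact le_rfl
      · rw [if_neg hit]
        by_cases hcond : i ≤ bar x ∧ bar x < t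
        · rw [if_pos hcond]
          have hc1 : i.val ≤ n - 1 - x.val := hcond.1
          have hc2 : n - 1 - x.val < t.val := hcond.2
          rw [ih t j]
          rcases eq_or_ne t j with rfl | htj
          · rw [if_pos rfl, add_zero]
            have hij : i.val < t.val := by omega
            rw [if_neg (Fin.ne_of_val_ne (by omega)), if_pos hij]
            have hc' : n - t.val ≤ x.val ∧ x.val < n - i.val := by omega
            have hQ : 0 < Dlen (x :: xs) (n - t.val) (n - i.val) := by
              rw [Dlen_cons, if_pos hc']
              omega
            rw [tNat_of_pos hQ]
            rw [← WithBot.coe_one]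
            exact WithBot.coe_le_coe.2 (by exact_mod_cast hQ)
          · by_cases htj2 : t.val < j.val
            · rw [if_neg htj, if_pos htj2]
              rcases Nat.eq_zero_or_pos (Dlen xs (n - j.val) (n - t.val)) with hq0 | hqpos
              · rw [hq0, tNat_zero, WithBot.add_bot]
                exact bot_le
              · rw [tNat_of_pos hqpos]
                have hij : i.val < j.val := by omega
                rw [if_neg (Fin.ne_of_val_ne (by omega)), if_pos hij]
                have hc' : n - j.val ≤ x.val ∧ x.val < n - i.val := by omega
                have hmr : Dlen xs (n - j.val) (n - t.val) ≤ Dlen xs (n - j.val) x.val :=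
                  Dlen_mono_right (by omega)
                have hQ : Dlen xs (n - j.val) (n - t.val) + 1 ≤
                    Dlen (x :: xs) (n - j.val) (n - i.val) := by
                  rw [Dlen_cons, if_pos hc']
                  omega
                rw [tNat_of_pos (by omega)]
                rw [← WithBot.coe_one, ← WithBot.coe_add]
                exact WithBot.coe_le_coe.2 (by exact_mod_cast by omega)
            · rw [if_neg htj, if_neg htj2, WithBot.add_bot]
              exact bot_le
        · rw [if_neg hcond, WithBot.bot_add]
          exact bot_le
    · rcases eq_or_ne i j with rfl | hij
      · rw [if_pos rfl]
        have h0 : (fun t => letterMat x i t + rhoList xs t i) i = 0 := by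
          dsimp only
          rw [ih i i, if_pos rfl]
          simp [letterMat]
        exact le_trans (le_of_eq h0.symm)
          (Finset.le_sup (f := fun t => letterMat x i t + rhoList xs t i) (Finset.mem_univ i))
      · by_cases hlt : i.val < j.val
        · rw [if_neg hij, if_pos hlt]
          rcases Nat.eq_zero_or_pos (Dlen (x :: xs) (n - j.val) (n - i.val)) with hQ0 | hQpos
          · rw [hQ0, tNat_zero]
            exact bot_le
          · have hQdef : Dlen (x :: xs) (n - j.val) (n - i.val) =
                if n - j.val ≤ x.val ∧ x.val < n - i.val then
                  max (Dlen xs (n - j.val) (n - i.val)) (Dlen xs (n - j.val) x.val + 1)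
                else Dlen xs (n - j.val) (n - i.val) := Dlen_cons x xs _ _
            by_cases hc' : n - j.val ≤ x.val ∧ x.val < n - i.val
            · rw [if_pos hc'] at hQdef
              rcases le_or_gt (Dlen xs (n - j.val) x.val + 1)
                  (Dlen xs (n - j.val) (n - i.val)) with hmax1 | hmax2
              · refine le_trans (le_of_eq ?_) (Finset.le_sup (Finset.mem_univ i))
                rw [letterMat, if_pos rfl, zero_add, ih i j, if_neg hij, if_pos hlt]
                congr 1
                omega
              · have hQq2 : Dlen (x :: xs) (n - j.val) (n - i.val) =
                    Dlen xs (n - j.val) x.val + 1 := by omega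
                rcases Nat.eq_zero_or_pos (Dlen xs (n - j.val) x.val) with h20 | h2pos
                · refine le_trans (le_of_eq ?_) (Finset.le_sup (Finset.mem_univ j))
                  rw [ih j j, if_pos rfl, add_zero]
                  have hmb : i ≤ bar x ∧ bar x < j := by
                    constructor
                    · show i.val ≤ (bar x).val
                      rw [hbar]; omega
                    · show (bar x).val < j.val
                      rw [hbar]; omega
                  rw [letterMat, if_neg hij, if_pos hmb, hQq2, h20, tNat_of_pos (by omega)]
                  simp
                · have hbarlt : (bar x).val + 1 ≤ j.val := by
                    rw [hbar]; omega
                  have ht0lt : (bar x).val + 1 < n + 1 := by rw [hbar]; omega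
                  by_cases ht0j : (bar x).val + 1 = j.val
                  · exfalso
                    have hnj : n - j.val = x.val := by rw [← ht0j, hbar]; omega
                    rw [hnj] at h2pos
                    rw [Dlen_eq_zero (le_refl x.val)] at h2pos
                    omega
                  · set t₀ : Fin (n+1) := ⟨(bar x).val + 1, ht0lt⟩ with ht₀
                    have ht0j' : t₀.val < j.val := by
                      show (bar x).val + 1 < j.val
                      omega
                    refine le_trans (le_of_eq ?_) (Finset.le_sup (Finset.mem_univ t₀))
                    rw [ih t₀ j, if_neg (Fin.ne_of_val_ne (Nat.ne_of_lt ht0j')), if_pos ht0j']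
                    have hnt : n - t₀.val = x.val := by
                      show n - ((bar x).val + 1) = x.val
                      rw [hbar]; omega
                    rw [hnt]
                    have hmb : i ≠ t₀ ∧ (i ≤ bar x ∧ bar x < t₀) := by
                      have hiv : i.val ≤ (bar x).val := by
                        rw [hbar]; omega
                      refine ⟨Fin.ne_of_val_ne ?_, hiv, ?_⟩
                      · show i.val ≠ (bar x).val + 1
                        omega
                      · show (bar x).val < (bar x).val + 1
                        omega
                    rw [letterMat, if_neg hmb.1, if_pos hmb.2]
                    rw [tNat_of_pos h2pos, tNat_of_pos (by omega), hQq2]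
                    rw [← WithBot.coe_one, ← WithBot.coe_add]
                    congr 1
                    push_cast
                    try ring
            · rw [if_neg hc'] at hQdef
              refine le_trans (le_of_eq ?_) (Finset.le_sup (Finset.mem_univ i))
              rw [letterMat, if_pos rfl, zero_add, ih i j, if_neg hij, if_pos hlt, hQdef]
        · rw [if_neg hij, if_neg hlt]
          exact bot_le

theorem tNat_eq_coe_iff {q k : ℕ} (hk : 0 < k) :
    tNat q = ((k : ℝ) : Trop) ↔ q = k := by
  constructor
  · intro h
    rcases Nat.eq_zero_or_pos q with rfl | hq
    · rw [tNat_zero] at h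
      exact absurd h (by simp)
    · rw [tNat_of_pos hq] at h
      have := WithBot.coe_inj.1 h
      exact_mod_cast this
  · rintro rfl
    exact tNat_of_pos hk

theorem tNat_ne_zero (q : ℕ) : tNat q ≠ (((0 : ℕ) : ℝ) : Trop) := by
  intro h
  rcases Nat.eq_zero_or_pos q with rfl | hq
  · rw [tNat_zero] at h
    simp at h
  · rw [tNat_of_pos hq] at h
    have h2 := WithBot.coe_inj.1 h
    have : q = 0 := by exact_mod_cast h2
    omega
end StyAux
/-- A letter `a` occurs in the `k`-th row of `N(w)` iff there is a column index
`j > ā` such that `ρ_n(w)_{ā,j} = k` and `ρ_n(w)_{ā+1,j} = k - 1`. -/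
theorem mem_row_iff_rho
    (n : ℕ) (hn : 1 ≤ n) (w : List (Fin n)) (a : Fin n) (k : ℕ) (hk : 1 ≤ k) :
    a ∈ (delta^[k - 1] w).toFinset ↔
      ∃ j : Fin (n + 1), bar a < j ∧
        rhoList w (bar a) j = ((k : ℝ) : Trop) ∧
        rhoList w ⟨n - a.val, by omega⟩ j = (((k - 1 : ℕ) : ℝ) : Trop) := by
  have hn0 : 0 < n := hn
  have hav : a.val < n := a.isLt
  have hbarval : (bar a).val = n - 1 - a.val := rfl
  have hcomb := StyAux.comb hn0 w a (k - 1)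
  rw [StyAux.Rw] at hcomb
  rw [hcomb]
  constructor
  · rintro ⟨b, h1, h2⟩
    have ha : a ∈ (delta^[k-1] w).toFinset := hcomb.2 ⟨b, h1, h2⟩
    clear hcomb
    rcases Nat.eq_or_lt_of_le hk with hk1 | hk2
    · -- k = 1
      rw [← hk1] at ha h1 h2 ⊢
      rw [Function.iterate_zero_apply] at ha
      have hD1 : StyAux.Dlen w a.val (a.val + 1) = 1 := by
        have hge : 1 ≤ StyAux.Dlen w a.val (a.val + 1) := by
          refine (StyAux.MI hn0 w a.val (a.val+1) 1).1 ⟨fun _ => a, ?_, ?_⟩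
          · intro i hi
            dsimp only
            have hi0 : i = 0 := by omega
            subst hi0
            refine ⟨?_, by omega, by omega⟩
            show a ∈ StyAux.Rw w 0
            rw [StyAux.Rw, Function.iterate_zero_apply]
            exact ha
          · intro i hi
            omega
        have hle : StyAux.Dlen w a.val (a.val + 1) ≤ 1 := by
          by_contra hgt
          push_neg at hgt
          obtain ⟨m, hm1, hm2⟩ := (StyAux.MI hn0 w a.val (a.val+1) 2).2 (by omega)
          have q0 := (hm1 0 (by omega)).2
          have q1 := (hm1 1 (by omega)).2
          have q2 : (m 0).val < (m 1).val := hm2 0 (by omega)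
          omega
        omega
      refine ⟨⟨n - a.val, by omega⟩, ?_, ?_, ?_⟩
      · show n - 1 - a.val < n - a.val
        omega
      · rw [StyAux.rho_eq]
        have hne : bar a ≠ (⟨n - a.val, by omega⟩ : Fin (n+1)) := by
          refine Fin.ne_of_val_ne ?_
          show n - 1 - a.val ≠ n - a.val
          omega
        rw [if_neg hne, if_pos (show (bar a).val < n - a.val by rw [hbarval]; omega)]
        have e1 : n - (n - a.val) = a.val := by omega
        have e2 : n - (bar a).val = a.val + 1 := by rw [hbarval]; omega
        rw [e1, e2, hD1]
        exact StyAux.tNat_of_pos (by omega)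
      · rw [StyAux.rho_eq, if_pos rfl]
        simp
    · -- k ≥ 2
      have hblt : b < a.val := by
        by_contra hge
        push_neg at hge
        rw [StyAux.Dlen_eq_zero hge] at h2
        omega
      refine ⟨⟨n - b, by omega⟩, ?_, ?_, ?_⟩
      · show n - 1 - a.val < n - b
        omega
      · rw [StyAux.rho_eq]
        have hne : bar a ≠ (⟨n - b, by omega⟩ : Fin (n+1)) := by
          refine Fin.ne_of_val_ne ?_
          show n - 1 - a.val ≠ n - b
          omega
        rw [if_neg hne, if_pos (show (bar a).val < n - b by rw [hbarval]; omega)]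
        have e1 : n - (n - b) = b := by omega
        have e2 : n - (bar a).val = a.val + 1 := by rw [hbarval]; omega
        rw [e1, e2]
        rw [show k - 1 + 1 = k by omega] at h1
        rw [h1]
        exact StyAux.tNat_of_pos (by omega)
      · rw [StyAux.rho_eq]
        have hne2 : (⟨n - a.val, by omega⟩ : Fin (n+1)) ≠ (⟨n - b, by omega⟩ : Fin (n+1)) := by
          refine Fin.ne_of_val_ne ?_
          show n - a.val ≠ n - b
          omega
        rw [if_neg hne2, if_pos (show n - a.val < n - b by omega)]
        have e1 : n - (n - b) = b := by omega
        have e3 : n - (n - a.val) = a.val := by omega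
        rw [e1, e3, h2]
        exact StyAux.tNat_of_pos (by omega)
  · rintro ⟨j, hj, hj1, hj2⟩
    clear hcomb
    rw [StyAux.rho_eq] at hj1 hj2
    have hjval : (bar a).val < j.val := hj
    rw [hbarval] at hjval
    rw [if_neg (Fin.ne_of_val_ne (show (bar a).val ≠ j.val by rw [hbarval]; omega)),
      if_pos (show (bar a).val < j.val by rw [hbarval]; omega)] at hj1
    have e2 : n - (bar a).val = a.val + 1 := by rw [hbarval]; omega
    rw [e2] at hj1
    have hD1 : StyAux.Dlen w (n - j.val) (a.val + 1) = k :=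
      (StyAux.tNat_eq_coe_iff (by omega)).1 hj1
    have hj2' : n - a.val ≤ j.val := by omega
    rcases Nat.eq_or_lt_of_le hj2' with heq | hlt
    · -- j = ⟨n - a.val⟩, forces k = 1
      have hjeq : (⟨n - a.val, by omega⟩ : Fin (n+1)) = j := Fin.ext heq
      rw [if_pos hjeq] at hj2
      have hk1 : k = 1 := by
        by_contra hkne
        have hpos : 0 < k - 1 := by omega
        have h5 : ((0:ℝ) : Trop) = (((k - 1 : ℕ) : ℝ) : Trop) := by
          rw [← hj2]
          rfl
        have h6 := WithBot.coe_inj.1 h5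
        have : (0:ℕ) = k - 1 := by exact_mod_cast h6
        omega
      have hb : n - j.val = a.val := by omega
      rw [hb] at hD1
      refine ⟨a.val, ?_, ?_⟩
      · rw [show k - 1 + 1 = k by omega]
        exact hD1
      · rw [StyAux.Dlen_eq_zero le_rfl]
        omega
    · have hne2 : (⟨n - a.val, by omega⟩ : Fin (n+1)) ≠ j :=
        Fin.ne_of_val_ne (show n - a.val ≠ j.val by omega)
      rw [if_neg hne2, if_pos (show n - a.val < j.val from hlt)] at hj2
      have e3 : n - (n - a.val) = a.val := by omega
      rw [e3] at hj2
      have hk2 : 2 ≤ k := by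
        by_contra hk1'
        have hk1 : k = 1 := by omega
        rw [hk1] at hj2
        exact StyAux.tNat_ne_zero _ (by simpa using hj2)
      have hD2 : StyAux.Dlen w (n - j.val) a.val = k - 1 :=
        (StyAux.tNat_eq_coe_iff (by omega)).1 hj2
      refine ⟨n - j.val, ?_, hD2⟩
      rw [show k - 1 + 1 = k by omega]
      exact hD1
end

section
/- Let n ≥ 1 and let Σ be an alphabet of variables. If the stylic monoid styl_n satisfies a monoid identity u ≈ v (with u, v ∈ Σ^*), then u and v have exactly the same subsequences of length at most n. Equivalently, if there is a word of length at most n that is a subsequence of one of u, v but not of the other, then there exists a monoid homomorphism φ : Σ^* → styl_n with φ(u) ≠ φ(v). -/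
/-! ### Auxiliary machinery for the proof -/

open List in
lemma aux_sublist_triple {α : Type*} {x y z : α} {d : List α} (h : d <+ [x,y,z]) :
    d = [] ∨ d = [x] ∨ d = [y] ∨ d = [z] ∨ d = [x,y] ∨ d = [x,z] ∨ d = [y,z] ∨ d = [x,y,z] := by
  simp only [List.sublist_cons_iff, List.sublist_nil] at h
  aesop

open List in
lemma aux_sublist_double {α : Type*} {x : α} {d : List α} (h : d <+ [x,x]) :
    d = [] ∨ d = [x] ∨ d = [x,x] := by
  simp only [List.sublist_cons_iff, List.sublist_nil] at h
  aesop

/-- Strictly decreasing lists of letters with values in `[lo, hi)`. -/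
def DecrIn {n : ℕ} (lo hi : ℕ) (d : List (Fin n)) : Prop :=
  d.Pairwise (fun a b => b < a) ∧ ∀ x ∈ d, lo ≤ x.val ∧ x.val < hi

lemma decr_len_le {n : ℕ} {d : List (Fin n)} (h : d.Pairwise (fun a b => b < a))
    {m : ℕ} (hm : ∀ x ∈ d, x.val < m) : d.length ≤ m := by
  induction d generalizing m with
  | nil => simp
  | cons y l ih =>
    rw [List.pairwise_cons] at h
    have h1 : l.length ≤ y.val := ih h.2 (fun x hx => h.1 x hx)
    have h2 := hm y (by simp)
    simp only [List.length_cons]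
    omega

/-- The decreasing-subsequence spectrum relation on words. -/
def SpecR {n : ℕ} (w w' : List (Fin n)) : Prop :=
  ∀ lo hi kk : ℕ, (∃ d, d.Sublist w ∧ DecrIn lo hi d ∧ d.length = kk) ↔
    (∃ d, d.Sublist w' ∧ DecrIn lo hi d ∧ d.length = kk)

lemma spec_append_mono {n : ℕ} {w1 w2 w1' w2' : List (Fin n)}
    (h1 : ∀ lo hi kk, (∃ d, d.Sublist w1 ∧ DecrIn lo hi d ∧ d.length = kk) →
      ∃ d, d.Sublist w1' ∧ DecrIn lo hi d ∧ d.length = kk)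
    (h2 : ∀ lo hi kk, (∃ d, d.Sublist w2 ∧ DecrIn lo hi d ∧ d.length = kk) →
      ∃ d, d.Sublist w2' ∧ DecrIn lo hi d ∧ d.length = kk)
    {lo hi kk : ℕ} (h : ∃ d, d.Sublist (w1 ++ w2) ∧ DecrIn lo hi d ∧ d.length = kk) :
    ∃ d, d.Sublist (w1' ++ w2') ∧ DecrIn lo hi d ∧ d.length = kk := by
  obtain ⟨d, hd, ⟨hpw, hrange⟩, hlen⟩ := h
  obtain ⟨d1, d2, rfl, hd1, hd2⟩ := List.sublist_append_iff.1 hd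
  rw [List.pairwise_append] at hpw
  obtain ⟨hp1, hp2, hcross⟩ := hpw
  cases d2 with
  | nil =>
    obtain ⟨d1', hs1, hg1, hl1⟩ := h1 lo hi d1.length
      ⟨d1, hd1, ⟨hp1, fun x hx => hrange x (by simp [hx])⟩, rfl⟩
    exact ⟨d1', hs1.trans (List.sublist_append_left w1' w2'),
      hg1, by simpa using hl1 ▸ (by simpa using hlen)⟩
  | cons z d2t =>
    set m := z.val + 1 with hmdef
    have hzmem : z ∈ z :: d2t := by simp
    have hzr := hrange z (by simp)
    obtain ⟨d1', hs1, hg1, hl1⟩ := h1 m hi d1.length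
      ⟨d1, hd1, ⟨hp1, fun x hx => ⟨by have := hcross x hx z hzmem; omega,
        (hrange x (by simp [hx])).2⟩⟩, rfl⟩
    obtain ⟨d2', hs2, hg2, hl2⟩ := h2 lo m (z :: d2t).length
      ⟨z :: d2t, hd2, ⟨hp2, fun y hy => ⟨(hrange y (by simp [hy])).1, by
        rcases List.mem_cons.1 hy with rfl | hy'
        · omega
        · have := (List.pairwise_cons.1 hp2).1 y hy'; omega⟩⟩, rfl⟩
    refine ⟨d1' ++ d2', List.Sublist.append hs1 hs2, ⟨?_, ?_⟩, ?_⟩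
    · rw [List.pairwise_append]
      refine ⟨hg1.1, hg2.1, fun x hx y hy => ?_⟩
      have hxm := (hg1.2 x hx).1
      have hym := (hg2.2 y hy).2
      exact Fin.lt_def.2 (by omega)
    · intro x hx
      rcases List.mem_append.1 hx with hx1 | hx2
      · exact ⟨by have := (hg1.2 x hx1).1; omega, (hg1.2 x hx1).2⟩
      · exact ⟨(hg2.2 x hx2).1, by have := (hg2.2 x hx2).2; omega⟩
    · rw [List.length_append, hl1, hl2, ← List.length_append]
      simpa using hlen

/-- The spectrum congruence on the free monoid. -/
def specCon (n : ℕ) : Con (FreeMonoid (Fin n)) where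
  r w w' := SpecR (FreeMonoid.toList w) (FreeMonoid.toList w')
  iseqv := ⟨fun _ _ _ _ => Iff.rfl, fun h lo hi kk => (h lo hi kk).symm,
    fun h1 h2 lo hi kk => (h1 lo hi kk).trans (h2 lo hi kk)⟩
  mul' {w x y z} h1 h2 := by
    intro lo hi kk
    rw [FreeMonoid.toList_mul, FreeMonoid.toList_mul]
    constructor
    · exact fun h => spec_append_mono (fun lo hi kk => (h1 lo hi kk).mp)
        (fun lo hi kk => (h2 lo hi kk).mp) h
    · exact fun h => spec_append_mono (fun lo hi kk => (h1 lo hi kk).mpr)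
        (fun lo hi kk => (h2 lo hi kk).mpr) h

lemma stylRel_spec {n : ℕ} {w w' : FreeMonoid (Fin n)} (h : StylRel n w w') :
    specCon n w w' := by
  cases h with
  | knuth₁ a b c hab hbc =>
    intro lo hi kk
    have hT : FreeMonoid.toList (FreeMonoid.of a * FreeMonoid.of c * FreeMonoid.of b)
        = [a, c, b] := by simp [FreeMonoid.toList_mul, FreeMonoid.toList_of]
    have hT' : FreeMonoid.toList (FreeMonoid.of c * FreeMonoid.of a * FreeMonoid.of b)
        = [c, a, b] := by simp [FreeMonoid.toList_mul, FreeMonoid.toList_of]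
    rw [hT, hT']
    have hac : a < c := lt_of_le_of_lt hab hbc
    constructor <;> rintro ⟨d, hd, ⟨hpw, hrg⟩, rfl⟩
    · rcases aux_sublist_triple hd with rfl | rfl | rfl | rfl | rfl | rfl | rfl | rfl
      · exact ⟨[], by simp, ⟨by simp, by simp⟩, rfl⟩
      · exact ⟨[a], by simp, ⟨by simp, hrg⟩, rfl⟩
      · exact ⟨[c], by simp, ⟨by simp, hrg⟩, rfl⟩
      · exact ⟨[b], by simp, ⟨by simp, hrg⟩, rfl⟩
      · simp only [List.pairwise_cons] at hpw
        exact absurd (hpw.1 c (by simp)) (not_lt.2 hac.le)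
      · exact ⟨[a, b], by simp, ⟨hpw, hrg⟩, rfl⟩
      · exact ⟨[c, b], by simp, ⟨hpw, hrg⟩, rfl⟩
      · simp only [List.pairwise_cons] at hpw
        exact absurd (hpw.1 c (by simp)) (not_lt.2 hac.le)
    · rcases aux_sublist_triple hd with rfl | rfl | rfl | rfl | rfl | rfl | rfl | rfl
      · exact ⟨[], by simp, ⟨by simp, by simp⟩, rfl⟩
      · exact ⟨[c], by simp, ⟨by simp, hrg⟩, rfl⟩
      · exact ⟨[a], by simp, ⟨by simp, hrg⟩, rfl⟩
      · exact ⟨[b], by simp, ⟨by simp, hrg⟩, rfl⟩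
      · -- [c, a] ↦ [c, b]
        refine ⟨[c, b], by simp, ⟨by simp [hbc], ?_⟩, rfl⟩
        have h1 := hrg c (by simp)
        have h2 := hrg a (by simp)
        have hab' : a.val ≤ b.val := hab
        have hbc' : b.val < c.val := hbc
        intro x hx
        simp only [List.mem_cons, List.not_mem_nil, or_false] at hx
        rcases hx with rfl | rfl
        · exact ⟨by omega, by omega⟩
        · exact ⟨by omega, by omega⟩
      · exact ⟨[c, b], by simp, ⟨hpw, hrg⟩, rfl⟩
      · exact ⟨[a, b], by simp, ⟨hpw, hrg⟩, rfl⟩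
      · simp only [List.pairwise_cons] at hpw
        exact absurd (hpw.2.1 b (by simp)) (not_lt.2 hab)
  | knuth₂ a b c hab hbc =>
    intro lo hi kk
    have hT : FreeMonoid.toList (FreeMonoid.of b * FreeMonoid.of a * FreeMonoid.of c)
        = [b, a, c] := by simp [FreeMonoid.toList_mul, FreeMonoid.toList_of]
    have hT' : FreeMonoid.toList (FreeMonoid.of b * FreeMonoid.of c * FreeMonoid.of a)
        = [b, c, a] := by simp [FreeMonoid.toList_mul, FreeMonoid.toList_of]
    rw [hT, hT']
    have hac : a < c := lt_of_lt_of_le hab hbc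
    constructor <;> rintro ⟨d, hd, ⟨hpw, hrg⟩, rfl⟩
    · rcases aux_sublist_triple hd with rfl | rfl | rfl | rfl | rfl | rfl | rfl | rfl
      · exact ⟨[], by simp, ⟨by simp, by simp⟩, rfl⟩
      · exact ⟨[b], by simp, ⟨by simp, hrg⟩, rfl⟩
      · exact ⟨[a], by simp, ⟨by simp, hrg⟩, rfl⟩
      · exact ⟨[c], by simp, ⟨by simp, hrg⟩, rfl⟩
      · exact ⟨[b, a], by simp, ⟨hpw, hrg⟩, rfl⟩
      · simp only [List.pairwise_cons] at hpw
        exact absurd (hpw.1 c (by simp)) (not_lt.2 hbc)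
      · simp only [List.pairwise_cons] at hpw
        exact absurd (hpw.1 c (by simp)) (not_lt.2 hac.le)
      · simp only [List.pairwise_cons] at hpw
        exact absurd (hpw.2.1 c (by simp)) (not_lt.2 hac.le)
    · rcases aux_sublist_triple hd with rfl | rfl | rfl | rfl | rfl | rfl | rfl | rfl
      · exact ⟨[], by simp, ⟨by simp, by simp⟩, rfl⟩
      · exact ⟨[b], by simp, ⟨by simp, hrg⟩, rfl⟩
      · exact ⟨[c], by simp, ⟨by simp, hrg⟩, rfl⟩
      · exact ⟨[a], by simp, ⟨by simp, hrg⟩, rfl⟩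
      · simp only [List.pairwise_cons] at hpw
        exact absurd (hpw.1 c (by simp)) (not_lt.2 hbc)
      · exact ⟨[b, a], by simp, ⟨by simp [hab], hrg⟩, rfl⟩
      · -- [c, a] ↦ [b, a]
        refine ⟨[b, a], by simp, ⟨by simp [hab], ?_⟩, rfl⟩
        have h1 := hrg c (by simp)
        have h2 := hrg a (by simp)
        have hab' : a.val < b.val := hab
        have hbc' : b.val ≤ c.val := hbc
        intro x hx
        simp only [List.mem_cons, List.not_mem_nil, or_false] at hx
        rcases hx with rfl | rfl
        · exact ⟨by omega, by omega⟩
        · exact ⟨by omega, by omega⟩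
      · simp only [List.pairwise_cons] at hpw
        exact absurd (hpw.1 c (by simp)) (not_lt.2 hbc)
  | idem a =>
    intro lo hi kk
    have hT : FreeMonoid.toList (FreeMonoid.of a * FreeMonoid.of a) = [a, a] := by
      simp [FreeMonoid.toList_mul, FreeMonoid.toList_of]
    have hT' : FreeMonoid.toList (FreeMonoid.of a) = [a] := FreeMonoid.toList_of a
    rw [hT, hT']
    constructor <;> rintro ⟨d, hd, ⟨hpw, hrg⟩, rfl⟩
    · rcases aux_sublist_double hd with rfl | rfl | rfl
      · exact ⟨[], by simp, ⟨by simp, by simp⟩, rfl⟩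
      · exact ⟨[a], by simp, ⟨by simp, hrg⟩, rfl⟩
      · simp only [List.pairwise_cons] at hpw
        exact absurd (hpw.1 a (by simp)) (lt_irrefl a)
    · rcases List.sublist_cons_iff.1 hd with h0 | ⟨r, rfl, hr⟩
      · rw [List.sublist_nil] at h0
        subst h0
        exact ⟨[], by simp, ⟨by simp, by simp⟩, rfl⟩
      · rw [List.sublist_nil] at hr
        subst hr
        exact ⟨[a], by simp, ⟨by simp, hrg⟩, rfl⟩


/-! ### The separating substitution -/

/-- The `i`-th separating letter (value `k - 1 - i`, clamped to stay in `Fin n`). -/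
def aLet (n k : ℕ) (hn : 0 < n) (i : ℕ) : Fin n := ⟨min (k - 1 - i) (n - 1), by omega⟩

lemma aLet_val {n k : ℕ} (hn : 0 < n) (hk : k ≤ n) (i : ℕ) :
    (aLet n k hn i).val = k - 1 - i := by
  simp only [aLet]
  omega

/-- The word substituted for the variable `x`: the letters `aLet i` for the positions `i`
where `t` has letter `x`, in increasing letter order. -/
def phiWord {σ : Type*} [DecidableEq σ] (n : ℕ) (hn : 0 < n) (t : List σ) (x : σ) :
    List (Fin n) :=
  (List.range t.length).reverse.filterMap fun i =>
    if t[i]? = some x then some (aLet n t.length hn i) else none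

lemma phiWord_pairwise {σ : Type*} [DecidableEq σ] {n : ℕ} (hn : 0 < n) {t : List σ}
    (hk : t.length ≤ n) (x : σ) : (phiWord n hn t x).Pairwise (· < ·) := by
  rw [phiWord, List.pairwise_filterMap]
  have hrev : (List.range t.length).reverse.Pairwise (fun a b => b < a) :=
    List.pairwise_reverse.2 (List.pairwise_lt_range : (List.range t.length).Pairwise (· < ·))
  refine hrev.imp_of_mem (fun {i j} hi hj hij => ?_)
  intro p hp q hq
  rw [List.mem_reverse, List.mem_range] at hi hj
  split at hp
  · split at hq
    · simp only [Option.mem_def, Option.some.injEq] at hp hq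
      subst hp; subst hq
      rw [Fin.lt_def, aLet_val hn hk, aLet_val hn hk]
      omega
    · simp at hq
  · simp at hp

lemma subst_sublist {σ : Type*} [DecidableEq σ] {n : ℕ} (hn : 0 < n) {t : List σ}
    (hk : t.length ≤ n) :
    ∀ (w : List σ) (j : ℕ), (t.drop j).Sublist w →
      ((List.range' j (t.length - j)).map (aLet n t.length hn)).Sublist
        (w.flatMap (phiWord n hn t)) := by
  intro w
  induction w with
  | nil =>
    intro j h
    rw [List.sublist_nil] at h
    rw [List.drop_eq_nil_iff] at h
    have : t.length - j = 0 := by omega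
    simp [this]
  | cons x w' ih =>
    intro j h
    rcases List.sublist_cons_iff.1 h with h' | ⟨r, hr, hr'⟩
    · exact (ih j h').trans (List.sublist_append_right (phiWord n hn t x) _)
    · have hj : j < t.length := by
        by_contra hc
        rw [List.drop_eq_nil_iff.2 (by omega)] at hr
        exact absurd hr (by simp)
      have hdrop := List.drop_eq_getElem_cons hj (l := t)
      rw [hdrop] at hr
      have hx : t[j] = x := by
        injection hr with h1 h2
      have hrt : r = t.drop (j + 1) := by injection hr with h1 h2; exact h2.symm
      subst hrt
      have htail := ih (j + 1) hr'
      have hmem : aLet n t.length hn j ∈ phiWord n hn t x := by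
        rw [phiWord, List.mem_filterMap]
        refine ⟨j, by simp [List.mem_reverse, List.mem_range, hj], ?_⟩
        rw [List.getElem?_eq_getElem hj, hx]
        simp
      have hsplit : t.length - j = (t.length - (j + 1)) + 1 := by omega
      rw [hsplit, List.range'_succ, List.map_cons, List.flatMap_cons]
      exact ((List.singleton_sublist.2 hmem).append htail)

lemma witness_decr {σ : Type*} [DecidableEq σ] {n : ℕ} (hn : 0 < n) {t : List σ}
    (hk : t.length ≤ n) :
    DecrIn 0 n ((List.range' 0 t.length).map (aLet n t.length hn)) := by
  constructor
  · rw [List.pairwise_map]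
    have : (List.range' 0 t.length).Pairwise (· < ·) := by
      have := (List.pairwise_lt_range : (List.range t.length).Pairwise (· < ·))
      simpa [List.range_eq_range'] using this
    refine this.imp_of_mem (fun {i j} hi hj hij => ?_)
    rw [List.mem_range'] at hi hj
    rw [Fin.lt_def, aLet_val hn hk, aLet_val hn hk]
    obtain ⟨i', hi', rfl⟩ := hi
    obtain ⟨j', hj', rfl⟩ := hj
    omega
  · intro x hx
    rw [List.mem_map] at hx
    obtain ⟨i, hi, rfl⟩ := hx
    rw [aLet_val hn hk]
    rw [List.mem_range'] at hi
    obtain ⟨i', hi', rfl⟩ := hi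
    omega

lemma flat_bound {σ : Type*} [DecidableEq σ] {n : ℕ} (hn : 0 < n) {t : List σ}
    (hk : t.length ≤ n) (ht : t ≠ []) (w : List σ) :
    ∀ x ∈ w.flatMap (phiWord n hn t), x.val < t.length := by
  intro x hx
  rw [List.mem_flatMap] at hx
  obtain ⟨y, _, hy⟩ := hx
  rw [phiWord, List.mem_filterMap] at hy
  obtain ⟨i, hi, hif⟩ := hy
  split at hif
  · simp only [Option.some.injEq] at hif
    subst hif
    rw [aLet_val hn hk]
    have hlen : 0 < t.length := List.length_pos_iff.2 ht
    omega
  · exact absurd hif (by simp)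

/-- Key detection lemma: a strictly decreasing subsequence of the substituted word of
full length forces `t` to be a subsequence. -/
lemma detect {σ : Type*} [DecidableEq σ] {n : ℕ} (hn : 0 < n) {t : List σ}
    (hk : t.length ≤ n) :
    ∀ (w : List σ) (j : ℕ) (d : List (Fin n)),
      d.Sublist (w.flatMap (phiWord n hn t)) → d.Pairwise (fun a b => b < a) →
      (∀ x ∈ d, x.val < t.length - j) → d.length = t.length - j →
      (t.drop j).Sublist w := by
  intro w
  induction w with
  | nil =>
    intro j d hd _ _ hlen
    simp only [List.flatMap_nil, List.sublist_nil] at hd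
    subst hd
    simp only [List.length_nil] at hlen
    rw [List.drop_eq_nil_iff.2 (by omega)]
  | cons x w' ih =>
    intro j d hd hpw hbound hlen
    rcases Nat.eq_zero_or_pos (t.length - j) with h0 | hpos
    · rw [List.drop_eq_nil_iff.2 (by omega)]
      exact List.nil_sublist _
    · rw [List.flatMap_cons] at hd
      obtain ⟨d1, d2, rfl, hd1, hd2⟩ := List.sublist_append_iff.1 hd
      rw [List.pairwise_append] at hpw
      obtain ⟨hp1, hp2, hcross⟩ := hpw
      have hd1p : d1.Pairwise (· < ·) := (phiWord_pairwise hn hk x).sublist hd1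
      cases d1 with
      | nil =>
        simp only [List.nil_append] at hbound hlen ⊢
        exact (ih j d2 hd2 hp2 hbound hlen).cons x
      | cons e d1t =>
        have h1t : d1t = [] := by
          cases d1t with
          | nil => rfl
          | cons f _ =>
            have h1 := (List.pairwise_cons.1 hp1).1 f (by simp)
            have h2 := (List.pairwise_cons.1 hd1p).1 f (by simp)
            exact absurd h2 (not_lt.2 h1.le)
        subst h1t
        have hmem : e ∈ phiWord n hn t x := List.singleton_sublist.1 hd1
        rw [phiWord, List.mem_filterMap] at hmem
        obtain ⟨i, hi, hif⟩ := hmem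
        rw [List.mem_reverse, List.mem_range] at hi
        have htj : t[i]? = some x ∧ e = aLet n t.length hn i := by
          split at hif
          · simp only [Option.some.injEq] at hif
            exact ⟨by assumption, hif.symm⟩
          · exact absurd hif (by simp)
        have heval : e.val = t.length - 1 - i := htj.2 ▸ aLet_val hn hk i
        have he1 : e.val < t.length - j := hbound e (by simp)
        have hd2b : ∀ y ∈ d2, y.val < e.val :=
          fun y hy => hcross e (by simp) y hy
        have hd2len : d2.length ≤ e.val := decr_len_le hp2 hd2b
        have hlen2 : d2.length = t.length - j - 1 := by
          simp only [List.length_append, List.length_cons, List.length_nil] at hlen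
          omega
        have hij : i = j := by omega
        subst hij
        have hdrop := ih (i + 1) d2 hd2 hp2
          (fun y hy => by have := hd2b y hy; omega) (by omega)
        have hjlt : i < t.length := hi
        rw [List.drop_eq_getElem_cons hjlt]
        have hx : t[i] = x := by
          have := htj.1
          rw [List.getElem?_eq_getElem hjlt] at this
          injection this
        rw [hx]
        exact hdrop.cons₂ x

/-- Core separation lemma. -/
lemma styl_core (n : ℕ) (hn : 1 ≤ n) {σ : Type*} (u v : FreeMonoid σ) (t : List σ)
    (ht : t.length ≤ n) (hu : t.Sublist (FreeMonoid.toList u))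
    (hv : ¬ t.Sublist (FreeMonoid.toList v)) :
    ∃ φ : FreeMonoid σ →* Styl n, φ u ≠ φ v := by
  classical
  have hn0 : 0 < n := hn
  set k := t.length with hkdef
  have htne : t ≠ [] := by
    rintro rfl
    exact hv (List.nil_sublist _)
  let f : σ → Styl n := fun x => (stylCon n).mk' (FreeMonoid.ofList (phiWord n hn0 t x))
  have key : ∀ l : List σ, (l.map f).prod =
      (stylCon n).mk' (FreeMonoid.ofList (l.flatMap (phiWord n hn0 t))) := by
    intro l
    induction l with
    | nil =>
      simp only [List.map_nil, List.prod_nil, List.flatMap_nil]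
      rw [show (FreeMonoid.ofList ([] : List (Fin n))) = 1 from rfl, map_one]
    | cons x l' ih =>
      rw [List.map_cons, List.prod_cons, ih, List.flatMap_cons, FreeMonoid.ofList_append,
        map_mul]
  refine ⟨FreeMonoid.lift f, fun heq => ?_⟩
  rw [FreeMonoid.lift_apply, FreeMonoid.lift_apply, key, key] at heq
  have hcon : stylCon n (FreeMonoid.ofList ((FreeMonoid.toList u).flatMap (phiWord n hn0 t)))
      (FreeMonoid.ofList ((FreeMonoid.toList v).flatMap (phiWord n hn0 t))) :=
    ((stylCon n).eq).1 heq
  have hle : stylCon n ≤ specCon n := Con.conGen_le.2 (fun x y h => stylRel_spec h)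
  have hs := hle hcon
  have hs' : SpecR ((FreeMonoid.toList u).flatMap (phiWord n hn0 t))
      ((FreeMonoid.toList v).flatMap (phiWord n hn0 t)) := by
    have := hs
    exact this
  have hwit : ∃ d, d.Sublist ((FreeMonoid.toList u).flatMap (phiWord n hn0 t)) ∧
      DecrIn 0 n d ∧ d.length = k := by
    refine ⟨(List.range' 0 k).map (aLet n k hn0), ?_, witness_decr hn0 ht, by simp⟩
    have := subst_sublist hn0 ht (FreeMonoid.toList u) 0 (by simpa using hu)
    simpa using this
  obtain ⟨d, hd, hgood, hdl⟩ := (hs' 0 n k).1 hwit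
  have hb : ∀ x ∈ d, x.val < k := fun x hx =>
    flat_bound hn0 ht htne (FreeMonoid.toList v) x (hd.subset hx)
  have := detect hn0 ht (FreeMonoid.toList v) 0 d hd hgood.1 (by simpa using hb)
    (by simpa using hdl)
  exact hv (by simpa using this)

/-- If `styl_n` satisfies `u ≈ v` then `u` and `v` have the same subsequences of
length at most `n`; equivalently, if some word of length `≤ n` is a subsequence of one but not
the other, then some evaluation in `styl_n` separates `u` and `v`. -/
theorem styl_satisfies_implies_Jn
    (n : ℕ) (hn : 1 ≤ n) (σ : Type*) (u v : FreeMonoid σ) :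
    (Satisfies (Styl n) u v →
      ∀ t : List σ, t.length ≤ n →
        (t.Sublist (FreeMonoid.toList u) ↔ t.Sublist (FreeMonoid.toList v))) ∧
    ((∃ t : List σ, t.length ≤ n ∧
        ¬ (t.Sublist (FreeMonoid.toList u) ↔ t.Sublist (FreeMonoid.toList v))) →
      ∃ φ : FreeMonoid σ →* Styl n, φ u ≠ φ v) := by
  have main : ∀ t : List σ, t.length ≤ n →
      ¬ (t.Sublist (FreeMonoid.toList u) ↔ t.Sublist (FreeMonoid.toList v)) →
      ∃ φ : FreeMonoid σ →* Styl n, φ u ≠ φ v := by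
    intro t ht hiff
    have h1 : (t.Sublist (FreeMonoid.toList u) ∧ ¬ t.Sublist (FreeMonoid.toList v)) ∨
        (t.Sublist (FreeMonoid.toList v) ∧ ¬ t.Sublist (FreeMonoid.toList u)) := by
      tauto
    rcases h1 with ⟨h1, h2⟩ | ⟨h1, h2⟩
    · exact styl_core n hn u v t ht h1 h2
    · obtain ⟨φ, hφ⟩ := styl_core n hn v u t ht h1 h2
      exact ⟨φ, fun h => hφ h.symm⟩
  constructor
  · intro hsat t ht
    by_contra hiff
    obtain ⟨φ, hφ⟩ := main t ht hiff
    exact hφ (hsat φ)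
  · rintro ⟨t, ht, hiff⟩
    exact main t ht hiff
end
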